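/- arXiv:1105.5105 — 3 statements merged into one kernel-verified Lean document; each statement's English description precedes it below -/
import Mathlib

section
/- Let ω be any fixed environment such that |C_x| = ∞ and |M_x| < ∞ for every x ∈ Z^d. Then the random walk in environment ω is transient ℙ_ω-almost surely, i.e. ℙ_ω-almost surely every site of Z^d is visited only finitely often. -/
open MeasureTheory Filter Set Topology
open scoped Classical ENNReal

noncomputable section

/-- Lattice sites of `ℤ^d`. -/
abbrev Site (d : ℕ) := Fin d → ℤ

/-- The `2d` unit vectors `±e_i` of `ℤ^d`, indexed by `Fin d × Bool`
(`true` for `+e_i`, `false` for `-e_i`). -/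
def stepVec (d : ℕ) (i : Fin d × Bool) : Site d :=
  if i.2 = true then Pi.single i.1 1 else -Pi.single i.1 1

/-- An element of `𝒫`: a probability measure on the set `E` of unit vectors of `ℤ^d`,
recorded via its probability mass function on lattice vectors. -/
structure EnvDist (d : ℕ) where
  prob : Site d → ℝ
  nonneg : ∀ v, 0 ≤ prob v
  support : ∀ v, prob v ≠ 0 → ∃ i, v = stepVec d i
  total : ∑ i : Fin d × Bool, prob (stepVec d i) = 1

instance {d : ℕ} : MeasurableSpace (EnvDist d) :=
  MeasurableSpace.comap EnvDist.prob inferInstance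

/-- Environments: an element of `𝒫` at every site. -/
abbrev EnvOmega (d : ℕ) := Site d → EnvDist d

/-- Path space for the walk. -/
abbrev PathSpace (d : ℕ) := ℕ → Site d

/-- Sample space for the annealed walk: environment together with path. -/
abbrev RWSpace (d : ℕ) := EnvOmega d × PathSpace d

/-- Dot product of a lattice vector with a real vector. -/
def dotR {d : ℕ} (x : Site d) (l : Fin d → ℝ) : ℝ := ∑ i, (x i : ℝ) * l i

/-- Dot product of two lattice vectors. -/
def dotZ {d : ℕ} (x y : Site d) : ℤ := ∑ i, x i * y i

/-- Quenched probability that the walk follows the steps of `x` for its first `n` steps. -/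
def pathWeight {d : ℕ} (ω : EnvOmega d) (n : ℕ) (x : ℕ → Site d) : ℝ :=
  ∏ k ∈ Finset.range n, (ω (x k)).prob (x (k + 1) - x k)

/-- `ν` is the product measure `μ^{⊗ℤ^d}`, i.e. the coordinates are i.i.d. with law `μ`. -/
def IsIIDEnv {d : ℕ} (μ : Measure (EnvDist d)) (ν : Measure (EnvOmega d)) : Prop :=
  IsProbabilityMeasure μ ∧ IsProbabilityMeasure ν ∧
    ∀ (s : Finset (Site d)) (A : Site d → Set (EnvDist d)),
      (∀ x ∈ s, MeasurableSet (A x)) →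
      ν {ω | ∀ x ∈ s, ω x ∈ A x} = ∏ x ∈ s, μ (A x)

/-- `P` is the annealed law of the RWRE started at the origin in an i.i.d. environment
with marginal `μ`: the environment marginal is the i.i.d. product, and the cylinder
probabilities are given by averaging the quenched Markov-chain probabilities. -/
def IsRWRE {d : ℕ} (μ : Measure (EnvDist d)) (P : Measure (RWSpace d)) : Prop :=
  IsProbabilityMeasure P ∧ IsIIDEnv μ (P.map Prod.fst) ∧
    ∀ (n : ℕ) (x : ℕ → Site d) (A : Set (EnvOmega d)), MeasurableSet A →
      (P {q | q.1 ∈ A ∧ ∀ k ≤ n, q.2 k = x k}).toReal =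
        (if x 0 = 0 then (1 : ℝ) else 0) * ∫ ω in A, pathWeight ω n x ∂(P.map Prod.fst)

/-- `Q` is the quenched law `ℙ_ω` of the walk in the fixed environment `ω`, started at the
origin. -/
def IsQuenchedRW {d : ℕ} (ω : EnvOmega d) (Q : Measure (PathSpace d)) : Prop :=
  IsProbabilityMeasure Q ∧
    ∀ (n : ℕ) (x : ℕ → Site d),
      (Q {w | ∀ k ≤ n, w k = x k}).toReal =
        (if x 0 = 0 then (1 : ℝ) else 0) * pathWeight ω n x

/-- `x → y`: there is a directed path from `x` to `y` in the graph `G(ω)`. -/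
def Reaches {d : ℕ} (ω : EnvOmega d) : Site d → Site d → Prop :=
  Relation.ReflTransGen (fun a b => 0 < (ω a).prob (b - a))

/-- The forward cluster `C_x`. -/
def clusterC {d : ℕ} (ω : EnvOmega d) (x : Site d) : Set (Site d) := {y | Reaches ω x y}

/-- The mutually connected cluster `M_x = C_x ∩ B_x`. -/
def clusterM {d : ℕ} (ω : EnvOmega d) (x : Site d) : Set (Site d) :=
  {y | Reaches ω x y ∧ Reaches ω y x}

/-- The local drift `u = ∑_e γ(e) e` of an environment value `γ`. -/
def drift {d : ℕ} (γ : EnvDist d) : Fin d → ℝ :=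
  fun i => ∑ k : Fin d × Bool, γ.prob (stepVec d k) * ((stepVec d k i : ℤ) : ℝ)

/-- `N_n`: the number of times before time `n` at which the walk sits on a site whose
environment equals `γ`. -/
def envCount {d : ℕ} (γ : EnvDist d) (q : RWSpace d) (n : ℕ) : ℕ :=
  Set.ncard {m : ℕ | m < n ∧ q.1 (q.2 m) = γ}

end

namespace RWT

variable {d : ℕ}

/-! ### Padding finite vectors -/

def extF {n : ℕ} (f : Fin (n + 1) → Site d) : ℕ → Site d :=
  fun k => f ⟨min k n, Nat.lt_succ_of_le (min_le_right _ _)⟩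

lemma extF_ofFun (c : ℕ → Site d) (n k : ℕ) (h : k ≤ n) :
    extF (n := n) (fun j => c (j : ℕ)) k = c k := by
  simp only [extF]
  exact congrArg c (min_eq_left h)

lemma extF_coe {n : ℕ} (f : Fin (n + 1) → Site d) (j : Fin (n + 1)) :
    extF f (j : ℕ) = f j :=
  congrArg f (Fin.ext (min_eq_left (Nat.lt_succ_iff.mp j.isLt)))

/-! ### Visit counting -/

def cnt (x : Site d) (w : ℕ → Site d) (n : ℕ) : ℕ :=
  ((Finset.range (n + 1)).filter fun k => w k = x).card

lemma cnt_congr {x : Site d} {w w' : ℕ → Site d} {n : ℕ}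
    (h : ∀ k ≤ n, w k = w' k) : cnt x w n = cnt x w' n := by
  unfold cnt
  congr 1
  apply Finset.filter_congr
  intro k hk
  rw [h k (Nat.lt_succ_iff.mp (Finset.mem_range.mp hk))]

lemma cnt_lt {x : Site d} {w : ℕ → Site d} {a b : ℕ} (hx : w b = x) (hab : a < b) :
    cnt x w a < cnt x w b := by
  apply Finset.card_lt_card
  constructor
  · apply Finset.filter_subset_filter
    exact Finset.range_subset_range.mpr (by omega)
  · intro hsub
    have : b ∈ (Finset.range (a + 1)).filter fun k => w k = x :=
      hsub (by simp [Finset.mem_filter, Finset.mem_range, hx])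
    simp [Finset.mem_filter, Finset.mem_range] at this
    omega

lemma cnt_zero (x : Site d) (w : ℕ → Site d) :
    cnt x w 0 = if w 0 = x then 1 else 0 := by
  unfold cnt
  rw [Finset.range_one]
  split <;> simp_all [Finset.filter_singleton]

lemma cnt_succ (x : Site d) (w : ℕ → Site d) (k : ℕ) :
    cnt x w (k + 1) = cnt x w k + if w (k + 1) = x then 1 else 0 := by
  unfold cnt
  rw [Finset.range_add_one, Finset.filter_insert]
  split
  · rw [Finset.card_insert_of_notMem (by simp)]
  · simp

lemma exists_nth (x : Site d) (w : ℕ → Site d) (m : ℕ) (hm : 1 ≤ m)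
    (h : ∃ s : Finset ℕ, s.card = m ∧ ∀ k ∈ s, w k = x) :
    ∃ n, cnt x w n = m ∧ w n = x ∧ ∀ k < n, cnt x w k < m := by
  obtain ⟨s, hcard, hs⟩ := h
  have hne : s.Nonempty := by rw [← Finset.card_pos, hcard]; omega
  have hM : m ≤ cnt x w (s.max' hne) := by
    rw [← hcard]
    apply Finset.card_le_card
    intro k hk
    simp only [Finset.mem_filter, Finset.mem_range]
    exact ⟨Nat.lt_succ_of_le (s.le_max' k hk), hs k hk⟩
  have hex : ∃ n, m ≤ cnt x w n := ⟨_, hM⟩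
  obtain ⟨n, h1, hmin⟩ : ∃ n, m ≤ cnt x w n ∧ ∀ k < n, cnt x w k < m :=
    ⟨Nat.find hex, Nat.find_spec hex, fun k hk => by
      have := Nat.find_min hex hk; omega⟩
  have hkey : cnt x w n = m ∧ w n = x := by
    cases n with
    | zero =>
      have := cnt_zero x w
      constructor
      · split at this <;> omega
      · split at this
        · assumption
        · omega
    | succ k =>
      have hlt : cnt x w k < m := hmin k (by omega)
      have := cnt_succ x w k
      constructor
      · split at this <;> omega
      · split at this
        · assumption
        · omega
  exact ⟨n, hkey.1, hkey.2, hmin⟩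

lemma nth_unique {x : Site d} {w : ℕ → Site d} {m a b : ℕ}
    (ha : cnt x w a = m) (hax : w a = x) (hb : cnt x w b = m) (hbx : w b = x) : a = b := by
  rcases lt_trichotomy a b with h | h | h
  · have := cnt_lt hbx h; omega
  · exact h
  · have := cnt_lt hax h; omega

end RWT
namespace RWT

variable {d : ℕ}

/-! ### Cylinders and prefix/loop sets -/

def Cyl (q : Σ n : ℕ, Fin (n + 1) → Site d) : Set (PathSpace d) :=
  {w | ∀ k ≤ q.1, w k = extF q.2 k}

lemma measurableSet_cyl (q : Σ n : ℕ, Fin (n + 1) → Site d) : MeasurableSet (Cyl q) := by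
  have : Cyl q = ⋂ (k : ℕ) (_ : k ≤ q.1), (fun w : PathSpace d => w k) ⁻¹' {extF q.2 k} := by
    ext w; simp [Cyl]
  rw [this]
  exact MeasurableSet.iInter fun k => MeasurableSet.iInter fun _ =>
    (measurable_pi_apply k) (measurableSet_singleton _)

def preSet (x : Site d) (m : ℕ) : Set (Σ n : ℕ, Fin (n + 1) → Site d) :=
  {q | extF q.2 0 = 0 ∧ extF q.2 q.1 = x ∧ cnt x (extF q.2) q.1 = m}

def loopSet (x : Site d) : Set (Σ t : ℕ, Fin (t + 1) → Site d) :=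
  {r | 1 ≤ r.1 ∧ extF r.2 0 = x ∧ extF r.2 r.1 = x ∧
    ∀ k, 0 < k → k < r.1 → extF r.2 k ≠ x}

def wgt (ω : EnvOmega d) (q : Σ n : ℕ, Fin (n + 1) → Site d) : ℝ :=
  pathWeight ω q.1 (extF q.2)

lemma wgt_nonneg (ω : EnvOmega d) (q : Σ n : ℕ, Fin (n + 1) → Site d) : 0 ≤ wgt ω q := by
  unfold wgt pathWeight
  exact Finset.prod_nonneg fun _ _ => (ω _).nonneg _

lemma sigma_eq {a b : Σ n : ℕ, Fin (n + 1) → Site d} (h1 : a.1 = b.1)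
    (h2 : ∀ k ≤ a.1, extF a.2 k = extF b.2 k) : a = b := by
  obtain ⟨n, f⟩ := a
  obtain ⟨n', f'⟩ := b
  simp only at h1
  subst h1
  simp only at h2
  congr 1
  funext j
  rw [← extF_coe f j, ← extF_coe f' j]
  exact h2 j (Nat.lt_succ_iff.mp j.isLt)

/-- Two cylinders whose data both record an `m`-th visit to `x` at the endpoint and
contain a common path must be equal. -/
lemma cyl_data_eq {x : Site d} {m : ℕ} {q q' : Σ n : ℕ, Fin (n + 1) → Site d}
    (hq : extF q.2 q.1 = x ∧ cnt x (extF q.2) q.1 = m)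
    (hq' : extF q'.2 q'.1 = x ∧ cnt x (extF q'.2) q'.1 = m)
    {w : PathSpace d} (hw : w ∈ Cyl q) (hw' : w ∈ Cyl q') : q = q' := by
  have hc : cnt x w q.1 = m := (cnt_congr fun k hk => hw k hk).trans hq.2
  have hc' : cnt x w q'.1 = m := (cnt_congr fun k hk => hw' k hk).trans hq'.2
  have hx : w q.1 = x := (hw q.1 le_rfl).trans hq.1
  have hx' : w q'.1 = x := (hw' q'.1 le_rfl).trans hq'.1
  have h1 : q.1 = q'.1 := nth_unique hc hx hc' hx'
  refine sigma_eq h1 fun k hk => ?_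
  rw [← hw k hk, ← hw' k (h1 ▸ hk)]

/-! ### Concatenation -/

def ccFun (q r : Σ n : ℕ, Fin (n + 1) → Site d) : ℕ → Site d :=
  fun j => if j ≤ q.1 then extF q.2 j else extF r.2 (j - q.1)

def catQ (q r : Σ n : ℕ, Fin (n + 1) → Site d) : Σ n : ℕ, Fin (n + 1) → Site d :=
  ⟨q.1 + r.1, fun j => ccFun q r (j : ℕ)⟩

lemma extF_cat (q r : Σ n : ℕ, Fin (n + 1) → Site d) {k : ℕ} (hk : k ≤ q.1 + r.1) :
    extF (catQ q r).2 k = ccFun q r k := by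
  simp only [catQ]
  exact extF_ofFun _ _ _ hk

lemma ccFun_le (q r : Σ n : ℕ, Fin (n + 1) → Site d) {k : ℕ} (hk : k ≤ q.1) :
    ccFun q r k = extF q.2 k := if_pos hk

lemma ccFun_gt (q r : Σ n : ℕ, Fin (n + 1) → Site d) {k : ℕ} (hk : ¬ k ≤ q.1) :
    ccFun q r k = extF r.2 (k - q.1) := if_neg hk

lemma ccFun_add (q r : Σ n : ℕ, Fin (n + 1) → Site d)
    (hx : extF q.2 q.1 = extF r.2 0) (j : ℕ) :
    ccFun q r (q.1 + j) = extF r.2 j := by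
  rcases Nat.eq_zero_or_pos j with h | h
  · subst h
    rw [Nat.add_zero, ccFun_le q r le_rfl, hx]
  · rw [ccFun_gt q r (k := q.1 + j) (by omega), show q.1 + j - q.1 = j from by omega]

lemma cnt_ccFun (x : Site d) {m : ℕ} {q r : Σ n : ℕ, Fin (n + 1) → Site d}
    (hq : q ∈ preSet x m) (hr : r ∈ loopSet x) :
    cnt x (ccFun q r) (q.1 + r.1) = m + 1 := by
  obtain ⟨t, ht⟩ : ∃ t, r.1 = t + 1 := ⟨r.1 - 1, by have := hr.1; omega⟩
  have hx : extF q.2 q.1 = extF r.2 0 := hq.2.1.trans hr.2.1.symm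
  have hbase : cnt x (ccFun q r) q.1 = m :=
    (cnt_congr fun k hk => ccFun_le q r hk).trans hq.2.2
  have hmid : ∀ j ≤ t, cnt x (ccFun q r) (q.1 + j) = m := by
    intro j hj
    induction j with
    | zero => exact hbase
    | succ i ih =>
      rw [show q.1 + (i + 1) = (q.1 + i) + 1 by omega, cnt_succ, ih (by omega),
        show (q.1 + i) + 1 = q.1 + (i + 1) by omega, ccFun_add q r hx,
        if_neg (hr.2.2.2 (i + 1) (by omega) (by omega))]
      omega
  rw [ht, show q.1 + (t + 1) = (q.1 + t) + 1 by omega, cnt_succ, hmid t le_rfl,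
    show (q.1 + t) + 1 = q.1 + (t + 1) by omega, ccFun_add q r hx, ← ht, hr.2.2.1,
    if_pos rfl]

lemma catQ_mem {x : Site d} {m : ℕ} {q r : Σ n : ℕ, Fin (n + 1) → Site d}
    (hq : q ∈ preSet x m) (hr : r ∈ loopSet x) : catQ q r ∈ preSet x (m + 1) := by
  have hx : extF q.2 q.1 = extF r.2 0 := hq.2.1.trans hr.2.1.symm
  refine ⟨?_, ?_, ?_⟩
  · rw [extF_cat q r (by omega), ccFun_le q r (by omega)]
    exact hq.1
  · show extF (catQ q r).2 (q.1 + r.1) = x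
    rw [extF_cat q r le_rfl, ccFun_add q r hx]
    exact hr.2.2.1
  · show cnt x (extF (catQ q r).2) (q.1 + r.1) = m + 1
    rw [cnt_congr fun k hk => extF_cat q r hk]
    exact cnt_ccFun x hq hr

end RWT
namespace RWT

noncomputable section

variable {d : ℕ}

lemma catQ_inj {x : Site d} {m : ℕ} {q r q' r' : Σ n : ℕ, Fin (n + 1) → Site d}
    (hq : q ∈ preSet x m) (hr : r ∈ loopSet x) (hq' : q' ∈ preSet x m)
    (hr' : r' ∈ loopSet x) (h : catQ q r = catQ q' r') : q = q' ∧ r = r' := by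
  have hx : extF q.2 q.1 = extF r.2 0 := hq.2.1.trans hr.2.1.symm
  have hx' : extF q'.2 q'.1 = extF r'.2 0 := hq'.2.1.trans hr'.2.1.symm
  have h1 : q.1 + r.1 = q'.1 + r'.1 := congrArg Sigma.fst h
  set w : ℕ → Site d := extF (catQ q r).2 with hw
  have hwk : ∀ k ≤ q.1 + r.1, w k = ccFun q r k := fun k hk => extF_cat q r hk
  have hwk' : ∀ k ≤ q'.1 + r'.1, w k = ccFun q' r' k := fun k hk => by
    rw [hw, h]; exact extF_cat q' r' hk
  have hcq : cnt x w q.1 = m := by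
    rw [cnt_congr fun k hk => (hwk k (by omega)).trans (ccFun_le q r hk)]
    exact hq.2.2
  have hcq' : cnt x w q'.1 = m := by
    rw [cnt_congr fun k hk => (hwk' k (by omega)).trans (ccFun_le q' r' hk)]
    exact hq'.2.2
  have hxq : w q.1 = x := by
    rw [hwk q.1 (by omega), ccFun_le q r le_rfl]; exact hq.2.1
  have hxq' : w q'.1 = x := by
    rw [hwk' q'.1 (by omega), ccFun_le q' r' le_rfl]; exact hq'.2.1
  have hnn : q.1 = q'.1 := nth_unique hcq hxq hcq' hxq'
  constructor
  · refine sigma_eq hnn fun k hk => ?_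
    rw [← ccFun_le q r hk, ← ccFun_le q' r' (hnn ▸ hk), ← hwk k (by omega),
      ← hwk' k (by omega)]
  · refine sigma_eq (by omega) fun k hk => ?_
    rw [← ccFun_add q r hx k, ← ccFun_add q' r' hx' k, ← hnn,
      ← hwk (q.1 + k) (by omega), ← hwk' (q.1 + k) (by omega), hnn]

lemma catQ_surj {x : Site d} {m : ℕ} (hm : 1 ≤ m) {p : Σ n : ℕ, Fin (n + 1) → Site d}
    (hp : p ∈ preSet x (m + 1)) :
    ∃ q ∈ preSet x m, ∃ r ∈ loopSet x, catQ q r = p := by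
  set w : ℕ → Site d := extF p.2 with hw
  set N := p.1 with hN
  have hcN : cnt x w N = m + 1 := hp.2.2
  have hxN : w N = x := hp.2.1
  have h0 : w 0 = 0 := hp.1
  obtain ⟨n, hcn, hxn, hmin⟩ : ∃ n, cnt x w n = m ∧ w n = x ∧ ∀ k < n, cnt x w k < m := by
    apply exists_nth x w m hm
    obtain ⟨s, hs1, hs2⟩ := Finset.exists_subset_card_eq
      (show m ≤ ((Finset.range (N + 1)).filter fun k => w k = x).card from by
        have h' : cnt x w N = m + 1 := hcN
        unfold cnt at h'
        omega)
    exact ⟨s, hs2, fun k hk => (Finset.mem_filter.mp (hs1 hk)).2⟩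
  have hnN : n < N := by
    rcases lt_trichotomy n N with h | h | h
    · exact h
    · rw [h] at hcn; omega
    · exact absurd (hmin N h) (by omega)
  refine ⟨⟨n, fun j => w (j : ℕ)⟩, ⟨?_, ?_, ?_⟩, ⟨N - n, fun j => w (n + (j : ℕ))⟩,
    ⟨?_, ?_, ?_, ?_⟩, ?_⟩
  · show extF (fun j : Fin (n + 1) => w (j : ℕ)) 0 = 0
    rw [extF_ofFun w n 0 (by omega)]; exact h0
  · show extF (fun j : Fin (n + 1) => w (j : ℕ)) n = x
    rw [extF_ofFun w n n le_rfl]; exact hxn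
  · show cnt x (extF (fun j : Fin (n + 1) => w (j : ℕ))) n = m
    rw [cnt_congr fun k hk => extF_ofFun w n k hk]; exact hcn
  · show 1 ≤ N - n
    omega
  · show extF (fun j : Fin (N - n + 1) => w (n + (j : ℕ))) 0 = x
    have hrw : extF (fun j : Fin (N - n + 1) => w (n + (j : ℕ))) 0 = w (n + 0) :=
      extF_ofFun (fun t => w (n + t)) (N - n) 0 (by omega)
    rw [hrw, Nat.add_zero]; exact hxn
  · show extF (fun j : Fin (N - n + 1) => w (n + (j : ℕ))) (N - n) = x
    have hrw : extF (fun j : Fin (N - n + 1) => w (n + (j : ℕ))) (N - n) = w (n + (N - n)) :=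
      extF_ofFun (fun t => w (n + t)) (N - n) (N - n) le_rfl
    rw [hrw, show n + (N - n) = N from by omega]
    exact hxN
  · intro k hk1 hk2
    have hk2' : k < N - n := hk2
    show extF (fun j : Fin (N - n + 1) => w (n + (j : ℕ))) k ≠ x
    have hrw : extF (fun j : Fin (N - n + 1) => w (n + (j : ℕ))) k = w (n + k) :=
      extF_ofFun (fun t => w (n + t)) (N - n) k (by omega)
    rw [hrw]
    intro hcon
    have l1 : cnt x w n < cnt x w (n + k) := cnt_lt hcon (by omega)
    have l2 : cnt x w (n + k) < cnt x w N := cnt_lt hxN (by omega)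
    omega
  · refine (sigma_eq (show N = n + (N - n) from by omega) fun k hk => ?_).symm
    have hk' : k ≤ n + (N - n) := by
      have : N = n + (N - n) := by omega
      omega
    rw [extF_cat _ _ hk']
    rcases le_or_gt k n with h | h
    · rw [ccFun_le _ _ h]
      exact (extF_ofFun w n k h).symm
    · rw [ccFun_gt _ _ (k := k) (by simp only; omega)]
      exact ((extF_ofFun (fun t => w (n + t)) (N - n) (k - n) (by omega)).trans
        (show w (n + (k - n)) = w k from by rw [show n + (k - n) = k from by omega])).symm

/-- Concatenation as an equivalence. -/
def catEquiv (x : Site d) (m : ℕ) (hm : 1 ≤ m) :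
    (↥(preSet x m) × ↥(loopSet x)) ≃ ↥(preSet x (m + 1)) :=
  Equiv.ofBijective (fun p => ⟨catQ p.1.1 p.2.1, catQ_mem p.1.2 p.2.2⟩)
    ⟨fun p p' h => by
      obtain ⟨h1, h2⟩ := catQ_inj p.1.2 p.2.2 p'.1.2 p'.2.2 (congrArg Subtype.val h)
      exact Prod.ext (Subtype.ext h1) (Subtype.ext h2),
     fun p => by
      obtain ⟨q, hq, r, hr, hcat⟩ := catQ_surj hm p.2
      exact ⟨(⟨q, hq⟩, ⟨r, hr⟩), Subtype.ext hcat⟩⟩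

lemma wgt_cat (ω : EnvOmega d) {x : Site d} {m : ℕ} {q r : Σ n : ℕ, Fin (n + 1) → Site d}
    (hq : q ∈ preSet x m) (hr : r ∈ loopSet x) :
    wgt ω (catQ q r) = wgt ω q * wgt ω r := by
  have hx : extF q.2 q.1 = extF r.2 0 := hq.2.1.trans hr.2.1.symm
  unfold wgt pathWeight
  show (∏ k ∈ Finset.range (q.1 + r.1), _) = _
  rw [Finset.prod_range_add]
  congr 1
  · apply Finset.prod_congr rfl
    intro k hk
    have hk' : k < q.1 := Finset.mem_range.mp hk
    rw [extF_cat q r (by omega), extF_cat q r (by omega), ccFun_le q r (by omega),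
      ccFun_le q r (by omega)]
  · apply Finset.prod_congr rfl
    intro k hk
    have hk' : k < r.1 := Finset.mem_range.mp hk
    rw [extF_cat q r (by omega), show q.1 + k + 1 = q.1 + (k + 1) from by omega,
      extF_cat q r (by omega), ccFun_add q r hx, ccFun_add q r hx]

end

end RWT
namespace RWT

noncomputable section

variable {d : ℕ}

/-- Total loop weight. -/
def rho (ω : EnvOmega d) (x : Site d) : ℝ≥0∞ :=
  ∑' r : ↥(loopSet x), ENNReal.ofReal (wgt ω (r : Σ n : ℕ, Fin (n + 1) → Site d))

def U (x : Site d) (m : ℕ) : Set (PathSpace d) :=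
  ⋃ q : ↥(preSet x m), Cyl (q : Σ n : ℕ, Fin (n + 1) → Site d)

lemma disjoint_cyl {x : Site d} {m : ℕ} :
    Pairwise (Function.onFun Disjoint
      fun q : ↥(preSet x m) => Cyl (q : Σ n : ℕ, Fin (n + 1) → Site d)) := by
  intro q q' hne
  rw [Function.onFun, Set.disjoint_left]
  intro w hw hw'
  exact hne (Subtype.ext (cyl_data_eq ⟨q.2.2.1, q.2.2.2⟩ ⟨q'.2.2.1, q'.2.2.2⟩ hw hw'))


variable {ω : EnvOmega d} {Q : Measure (PathSpace d)} (hQ : IsQuenchedRW ω Q)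

include hQ

lemma Q_cyl (q : Σ n : ℕ, Fin (n + 1) → Site d) (h0 : extF q.2 0 = 0) :
    Q (Cyl q) = ENNReal.ofReal (wgt ω q) := by
  haveI : IsProbabilityMeasure Q := hQ.1
  have h := hQ.2 q.1 (extF q.2)
  rw [if_pos h0, one_mul] at h
  have hfin : Q (Cyl q) ≠ ⊤ := measure_ne_top Q _
  rw [← ENNReal.ofReal_toReal hfin]
  exact congrArg ENNReal.ofReal h

lemma Q_U (x : Site d) (m : ℕ) :
    Q (U x m) = ∑' q : ↥(preSet x m),
      ENNReal.ofReal (wgt ω (q : Σ n : ℕ, Fin (n + 1) → Site d)) := by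
  rw [U, measure_iUnion disjoint_cyl fun q => measurableSet_cyl _]
  exact tsum_congr fun q => Q_cyl hQ _ q.2.1

lemma Q_U_succ (x : Site d) (m : ℕ) (hm : 1 ≤ m) :
    Q (U x (m + 1)) = Q (U x m) * rho ω x := by
  rw [Q_U hQ, Q_U hQ, ← (catEquiv x m hm).tsum_eq
    (fun q : ↥(preSet x (m + 1)) => ENNReal.ofReal (wgt ω (q : Σ n : ℕ, Fin (n + 1) → Site d)))]
  have : ∀ p : ↥(preSet x m) × ↥(loopSet x),
      ENNReal.ofReal (wgt ω ((catEquiv x m hm p : ↥(preSet x (m + 1))) :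
        Σ n : ℕ, Fin (n + 1) → Site d)) =
      ENNReal.ofReal (wgt ω (p.1 : Σ n : ℕ, Fin (n + 1) → Site d)) *
        ENNReal.ofReal (wgt ω (p.2 : Σ n : ℕ, Fin (n + 1) → Site d)) := by
    intro p
    rw [show ((catEquiv x m hm p : ↥(preSet x (m + 1))) : Σ n : ℕ, Fin (n + 1) → Site d)
        = catQ p.1.1 p.2.1 from rfl,
      wgt_cat ω p.1.2 p.2.2, ENNReal.ofReal_mul (wgt_nonneg ω _)]
  rw [tsum_congr this, ENNReal.tsum_prod', rho, ← ENNReal.tsum_mul_right]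
  exact tsum_congr fun a => by simp only; exact ENNReal.tsum_mul_left

lemma Q_U_le (x : Site d) (m : ℕ) :
    Q (U x (m + 1)) ≤ rho ω x ^ m := by
  have hP : IsProbabilityMeasure Q := hQ.1
  induction m with
  | zero =>
    rw [pow_zero]
    exact prob_le_one
  | succ k ih =>
    rw [Q_U_succ hQ x (k + 1) (by omega), pow_succ]
    exact mul_le_mul_left ih _

lemma Q_nonzero_start : Q {w : PathSpace d | w 0 ≠ 0} = 0 := by
  haveI : IsProbabilityMeasure Q := hQ.1
  have base : ∀ c : Site d, c ≠ 0 → Q {w : PathSpace d | w 0 = c} = 0 := by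
    intro c hc
    have h := hQ.2 0 (fun _ => c)
    rw [if_neg hc, zero_mul] at h
    have : {w : PathSpace d | ∀ k ≤ 0, w k = c} = {w : PathSpace d | w 0 = c} := by
      ext w; simp
    rw [this] at h
    have hfin : Q {w : PathSpace d | w 0 = c} ≠ ⊤ := measure_ne_top Q _
    rw [← ENNReal.ofReal_toReal hfin, h, ENNReal.ofReal_zero]
  have hsub : {w : PathSpace d | w 0 ≠ 0} ⊆
      ⋃ (c : Site d), ⋃ (_ : c ≠ 0), {w : PathSpace d | w 0 = c} := by
    intro w hw
    simp only [Set.mem_iUnion]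
    exact ⟨w 0, hw, rfl⟩
  apply measure_mono_null hsub
  exact measure_iUnion_null fun c => measure_iUnion_null fun hc => base c hc

omit hQ in
lemma V_subset_U (x : Site d) (m : ℕ) (hm : 1 ≤ m) :
    {w : PathSpace d | {n : ℕ | w n = x}.Infinite} ⊆
      U x m ∪ {w : PathSpace d | w 0 ≠ 0} := by
  intro w hw
  rcases eq_or_ne (w 0) 0 with h0 | h0
  · left
    obtain ⟨s, hsub, hcard⟩ := hw.exists_subset_card_eq m
    obtain ⟨n, hcn, hxn, -⟩ := exists_nth x w m hm ⟨s, hcard, fun k hk => hsub hk⟩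
    refine Set.mem_iUnion.mpr ⟨⟨⟨n, fun j => w (j : ℕ)⟩, ?_, ?_, ?_⟩, ?_⟩
    · show extF (fun j : Fin (n + 1) => w (j : ℕ)) 0 = 0
      rw [extF_ofFun w n 0 (by omega)]; exact h0
    · show extF (fun j : Fin (n + 1) => w (j : ℕ)) n = x
      rw [extF_ofFun w n n le_rfl]; exact hxn
    · show cnt x (extF (fun j : Fin (n + 1) => w (j : ℕ))) n = m
      rw [cnt_congr fun k hk => extF_ofFun w n k hk]; exact hcn
    · intro k hk
      exact (extF_ofFun w n k hk).symm
  · right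
    exact h0

lemma Q_V_le (x : Site d) (m : ℕ) :
    Q {w : PathSpace d | {n : ℕ | w n = x}.Infinite} ≤ rho ω x ^ m := by
  calc Q {w : PathSpace d | {n : ℕ | w n = x}.Infinite}
      ≤ Q (U x (m + 1) ∪ {w : PathSpace d | w 0 ≠ 0}) :=
        measure_mono (V_subset_U x (m + 1) (by omega))
    _ ≤ Q (U x (m + 1)) + Q {w : PathSpace d | w 0 ≠ 0} := measure_union_le _ _
    _ = Q (U x (m + 1)) := by rw [Q_nonzero_start hQ, add_zero]
    _ ≤ rho ω x ^ m := Q_U_le hQ x m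

end

end RWT
namespace RWT

noncomputable section

variable {d : ℕ}

/-! ### Step sequences -/

def padD {T : ℕ} (i₀ : Fin d × Bool) (σ : Fin T → Fin d × Bool) : ℕ → Fin d × Bool :=
  fun k => if h : k < T then σ ⟨k, h⟩ else i₀

lemma padD_lt {T : ℕ} (i₀ : Fin d × Bool) (σ : Fin T → Fin d × Bool) {k : ℕ} (hk : k < T) :
    padD i₀ σ k = σ ⟨k, hk⟩ := dif_pos hk

def posW (x : Site d) (σ : ℕ → Fin d × Bool) (k : ℕ) : Site d :=
  x + ∑ j ∈ Finset.range k, stepVec d (σ j)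

def Wt (ω : EnvOmega d) (x : Site d) (σ : ℕ → Fin d × Bool) (T : ℕ) : ℝ :=
  ∏ k ∈ Finset.range T, (ω (posW x σ k)).prob (stepVec d (σ k))

lemma posW_zero (x : Site d) (σ : ℕ → Fin d × Bool) : posW x σ 0 = x := by
  simp [posW]

lemma posW_succ (x : Site d) (σ : ℕ → Fin d × Bool) (k : ℕ) :
    posW x σ (k + 1) = posW x σ k + stepVec d (σ k) := by
  simp [posW, Finset.sum_range_succ, add_assoc]

lemma posW_congr {x : Site d} {σ σ' : ℕ → Fin d × Bool} {T : ℕ}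
    (h : ∀ k < T, σ k = σ' k) {k : ℕ} (hk : k ≤ T) : posW x σ k = posW x σ' k := by
  unfold posW
  congr 1
  exact Finset.sum_congr rfl fun j hj => by
    rw [h j (lt_of_lt_of_le (Finset.mem_range.mp hj) hk)]

lemma Wt_nonneg (ω : EnvOmega d) (x : Site d) (σ : ℕ → Fin d × Bool) (T : ℕ) :
    0 ≤ Wt ω x σ T :=
  Finset.prod_nonneg fun _ _ => (ω _).nonneg _

lemma Wt_congr {ω : EnvOmega d} {x : Site d} {σ σ' : ℕ → Fin d × Bool} {T : ℕ}
    (h : ∀ k < T, σ k = σ' k) : Wt ω x σ T = Wt ω x σ' T := by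
  unfold Wt
  apply Finset.prod_congr rfl
  intro k hk
  have hk' : k < T := Finset.mem_range.mp hk
  rw [posW_congr h (le_of_lt hk'), h k hk']

lemma posW_shift (x : Site d) (σ : ℕ → Fin d × Bool) (k : ℕ) :
    posW x σ (k + 1) = posW (x + stepVec d (σ 0)) (σ ∘ Nat.succ) k := by
  unfold posW
  rw [Finset.sum_range_succ']
  rw [Finset.sum_congr rfl fun j _ =>
    (show stepVec d ((σ ∘ Nat.succ) j) = stepVec d (σ (j + 1)) from rfl)]
  abel

lemma Wt_succ' (ω : EnvOmega d) (x : Site d) (σ : ℕ → Fin d × Bool) (T : ℕ) :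
    Wt ω x σ (T + 1) =
      (ω x).prob (stepVec d (σ 0)) * Wt ω (x + stepVec d (σ 0)) (σ ∘ Nat.succ) T := by
  unfold Wt
  rw [Finset.prod_range_succ', mul_comm]
  congr 1
  · rw [posW_zero]
  · apply Finset.prod_congr rfl
    intro k _
    rw [posW_shift]
    rfl

lemma padD_cons_zero {T : ℕ} (i₀ a : Fin d × Bool) (σ' : Fin T → Fin d × Bool) :
    padD i₀ (Fin.cons a σ') 0 = a := by
  rw [padD_lt i₀ _ (Nat.succ_pos T)]
  exact Fin.cons_zero (α := fun _ => Fin d × Bool) a σ'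

lemma padD_cons_succ {T : ℕ} (i₀ a : Fin d × Bool) (σ' : Fin T → Fin d × Bool)
    {k : ℕ} (hk : k < T) :
    padD i₀ (Fin.cons a σ') (k + 1) = padD i₀ σ' k := by
  rw [padD_lt i₀ _ (by omega : k + 1 < T + 1), padD_lt i₀ σ' hk]
  exact Fin.cons_succ (α := fun _ => Fin d × Bool) a σ' ⟨k, hk⟩

lemma Wt_pad_cons (ω : EnvOmega d) (x : Site d) {T : ℕ} (i₀ a : Fin d × Bool)
    (σ' : Fin T → Fin d × Bool) :
    Wt ω x (padD i₀ (Fin.cons a σ')) (T + 1) =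
      (ω x).prob (stepVec d a) * Wt ω (x + stepVec d a) (padD i₀ σ') T := by
  rw [Wt_succ', padD_cons_zero]
  congr 1
  apply Wt_congr
  intro k hk
  show padD i₀ (Fin.cons a σ') (k + 1) = padD i₀ σ' k
  exact padD_cons_succ i₀ a σ' hk

/-- Total weight of all step sequences of length `T` is `1`. -/
lemma sum_Wt (ω : EnvOmega d) (i₀ : Fin d × Bool) :
    ∀ (T : ℕ) (x : Site d), ∑ σ : Fin T → Fin d × Bool, Wt ω x (padD i₀ σ) T = 1 := by
  intro T
  induction T with
  | zero =>
    intro x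
    simp [Wt]
  | succ T ih =>
    intro x
    calc ∑ σ : Fin (T + 1) → Fin d × Bool, Wt ω x (padD i₀ σ) (T + 1)
        = ∑ p : (Fin d × Bool) × (Fin T → Fin d × Bool),
            Wt ω x (padD i₀ (Fin.cons p.1 p.2)) (T + 1) := by
          rw [← Equiv.sum_comp (Fin.consEquiv fun _ => Fin d × Bool)
            (fun σ => Wt ω x (padD i₀ σ) (T + 1))]
          rfl
      _ = ∑ a : Fin d × Bool, ∑ σ' : Fin T → Fin d × Bool,
            Wt ω x (padD i₀ (Fin.cons a σ')) (T + 1) :=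
          Fintype.sum_prod_type fun p => Wt ω x (padD i₀ (Fin.cons p.1 p.2)) (T + 1)
      _ = ∑ a : Fin d × Bool, (ω x).prob (stepVec d a) * 1 :=
          Finset.sum_congr rfl fun a _ => by
            rw [Finset.sum_congr rfl fun σ' _ => Wt_pad_cons ω x i₀ a σ',
              ← Finset.mul_sum, ih (x + stepVec d a)]
      _ = 1 := by
          rw [Finset.sum_congr rfl fun a _ => mul_one _]
          exact (ω x).total

/-- Sum of weights of sequences with a prescribed prefix. -/
lemma trace_sum (ω : EnvOmega d) (i₀ : Fin d × Bool) :
    ∀ (t T : ℕ), t ≤ T → ∀ (x : Site d) (τ : ℕ → Fin d × Bool),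
      ∑ σ : Fin T → Fin d × Bool,
        (if ∀ k < t, padD i₀ σ k = τ k then Wt ω x (padD i₀ σ) T else 0)
        = Wt ω x τ t := by
  intro t
  induction t with
  | zero =>
    intro T _ x τ
    have h1 : Wt ω x τ 0 = 1 := by simp [Wt]
    rw [h1, ← sum_Wt ω i₀ T x]
    apply Finset.sum_congr rfl
    intro σ _
    rw [if_pos]
    intro k hk
    exact absurd hk (by omega)
  | succ t ih =>
    intro T hT x τ
    obtain ⟨T', rfl⟩ : ∃ T', T = T' + 1 := ⟨T - 1, by omega⟩
    have ht' : t ≤ T' := by omega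
    have hsplit : ∀ (a : Fin d × Bool) (σ' : Fin T' → Fin d × Bool),
        (if ∀ k < t + 1, padD i₀ (Fin.cons a σ') k = τ k then
          Wt ω x (padD i₀ (Fin.cons a σ')) (T' + 1) else 0)
        = (if a = τ 0 then (ω x).prob (stepVec d (τ 0)) else 0) *
          (if ∀ k < t, padD i₀ σ' k = τ (k + 1) then
            Wt ω (x + stepVec d (τ 0)) (padD i₀ σ') T' else 0) := by
      intro a σ'
      by_cases h0 : a = τ 0
      · by_cases h1 : ∀ k < t, padD i₀ σ' k = τ (k + 1)
        · rw [if_pos ?_, if_pos h0, if_pos h1, Wt_pad_cons, h0]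
          intro k hk
          rcases Nat.eq_zero_or_pos k with rfl | hkpos
          · rw [padD_cons_zero]; exact h0
          · obtain ⟨k', rfl⟩ : ∃ k', k = k' + 1 := ⟨k - 1, by omega⟩
            rw [padD_cons_succ i₀ a σ' (by omega : k' < T')]
            exact h1 k' (by omega)
        · rw [if_neg ?_, if_pos h0, if_neg h1, mul_zero]
          intro hcon
          apply h1
          intro k hk
          rw [← padD_cons_succ i₀ a σ' (by omega : k < T')]
          exact hcon (k + 1) (by omega)
      · rw [if_neg ?_, if_neg h0, zero_mul]
        intro hcon
        apply h0
        rw [← padD_cons_zero i₀ a σ']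
        exact hcon 0 (by omega)
    calc (∑ σ : Fin (T' + 1) → Fin d × Bool,
            if ∀ k < t + 1, padD i₀ σ k = τ k then Wt ω x (padD i₀ σ) (T' + 1) else 0)
        = ∑ p : (Fin d × Bool) × (Fin T' → Fin d × Bool),
            (if ∀ k < t + 1, padD i₀ (Fin.cons p.1 p.2) k = τ k then
              Wt ω x (padD i₀ (Fin.cons p.1 p.2)) (T' + 1) else 0) := by
          rw [← Equiv.sum_comp (Fin.consEquiv fun _ => Fin d × Bool)
            (fun σ => if ∀ k < t + 1, padD i₀ σ k = τ k then
              Wt ω x (padD i₀ σ) (T' + 1) else 0)]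
          rfl
      _ = ∑ a : Fin d × Bool, ∑ σ' : Fin T' → Fin d × Bool,
            (if ∀ k < t + 1, padD i₀ (Fin.cons a σ') k = τ k then
              Wt ω x (padD i₀ (Fin.cons a σ')) (T' + 1) else 0) :=
          Fintype.sum_prod_type fun p => if ∀ k < t + 1, padD i₀ (Fin.cons p.1 p.2) k = τ k then
            Wt ω x (padD i₀ (Fin.cons p.1 p.2)) (T' + 1) else 0
      _ = ∑ a : Fin d × Bool, (if a = τ 0 then (ω x).prob (stepVec d (τ 0)) else 0) *
            (∑ σ' : Fin T' → Fin d × Bool, if ∀ k < t, padD i₀ σ' k = τ (k + 1) then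
              Wt ω (x + stepVec d (τ 0)) (padD i₀ σ') T' else 0) :=
          Finset.sum_congr rfl fun a _ => by
            rw [Finset.mul_sum]
            exact Finset.sum_congr rfl fun σ' _ => hsplit a σ'
      _ = (∑ a : Fin d × Bool, if a = τ 0 then (ω x).prob (stepVec d (τ 0)) else 0) *
            (∑ σ' : Fin T' → Fin d × Bool, if ∀ k < t, padD i₀ σ' k = τ (k + 1) then
              Wt ω (x + stepVec d (τ 0)) (padD i₀ σ') T' else 0) := by
          rw [Finset.sum_mul]
      _ = (ω x).prob (stepVec d (τ 0)) *
            Wt ω (x + stepVec d (τ 0)) (fun j => τ (j + 1)) t := by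
          rw [Finset.sum_ite_eq' Finset.univ (τ 0)
            (fun _ => (ω x).prob (stepVec d (τ 0))), if_pos (Finset.mem_univ _),
            ih T' ht' (x + stepVec d (τ 0)) (fun j => τ (j + 1))]
      _ = Wt ω x τ (t + 1) := by
          rw [Wt_succ' ω x τ t]
          rfl

end

end RWT
namespace RWT

noncomputable section

variable {d : ℕ}

lemma reaches_path {ω : EnvOmega d} {a b : Site d} (h : Reaches ω a b) :
    ∃ (L : ℕ) (c : ℕ → Site d), c 0 = a ∧ c L = b ∧
      ∀ k < L, 0 < (ω (c k)).prob (c (k + 1) - c k) := by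
  have h' : Relation.ReflTransGen (fun p q => 0 < (ω p).prob (q - p)) a b := h
  clear h
  induction h' using Relation.ReflTransGen.head_induction_on with
  | refl => exact ⟨0, fun _ => b, rfl, rfl, fun k hk => absurd hk (by omega)⟩
  | @head a₁ c₁ hstep htl ih =>
    obtain ⟨L, c, hc0, hcL, hcpos⟩ := ih
    subst hc0
    refine ⟨L + 1, fun k => if k = 0 then a₁ else c (k - 1), if_pos rfl, ?_, ?_⟩
    · simp
      exact hcL
    · intro k hk
      rcases Nat.eq_zero_or_pos k with rfl | hkpos
      · show 0 < (ω (if 0 = 0 then a₁ else c (0 - 1))).prob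
          ((if 0 + 1 = 0 then a₁ else c (0 + 1 - 1)) - (if 0 = 0 then a₁ else c (0 - 1)))
        simpa using hstep
      · obtain ⟨j, rfl⟩ : ∃ j, k = j + 1 := ⟨k - 1, by omega⟩
        show 0 < (ω (if j + 1 = 0 then a₁ else c (j + 1 - 1))).prob
          ((if j + 1 + 1 = 0 then a₁ else c (j + 1 + 1 - 1)) -
            (if j + 1 = 0 then a₁ else c (j + 1 - 1)))
        have e1 : (if j + 1 = 0 then a₁ else c (j + 1 - 1)) = c j := by simp
        have e2 : (if j + 1 + 1 = 0 then a₁ else c (j + 1 + 1 - 1)) = c (j + 1) := by simp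
        rw [e1, e2]
        exact hcpos j (by omega)

lemma escape {ω : EnvOmega d} (x : Site d) (hC : (clusterC ω x).Infinite)
    (hM : (clusterM ω x).Finite) :
    ∃ (L : ℕ) (s : ℕ → Site d), 1 ≤ L ∧ s 0 = x ∧
      (∀ k < L, 0 < (ω (s k)).prob (s (k + 1) - s k)) ∧
      (∀ k, 0 < k → k ≤ L → s k ≠ x) ∧ ¬Reaches ω (s L) x := by
  obtain ⟨y, hy⟩ := (hC.diff hM).nonempty
  have hyC : Reaches ω x y := hy.1
  have hyx : ¬Reaches ω y x := fun h => hy.2 ⟨hy.1, h⟩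
  have hyne : y ≠ x := fun h => hyx (h ▸ Relation.ReflTransGen.refl)
  have hP : ∃ L, ∃ c : ℕ → Site d, c 0 = x ∧ c L = y ∧
      ∀ k < L, 0 < (ω (c k)).prob (c (k + 1) - c k) := reaches_path hyC
  obtain ⟨c, hc0, hcL, hcpos⟩ := Nat.find_spec hP
  have hnorev : ∀ k, 0 < k → k ≤ Nat.find hP → c k ≠ x := by
    intro k hk0 hkL hkx
    have hkL' : k < Nat.find hP :=
      lt_of_le_of_ne hkL fun h => hyne (by rw [← hcL, ← h, hkx])
    apply Nat.find_min hP (show Nat.find hP - k < Nat.find hP from by omega)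
    exact ⟨fun j => c (k + j),
      by show c (k + 0) = x; rw [Nat.add_zero]; exact hkx,
      by show c (k + (Nat.find hP - k)) = y
         rw [show k + (Nat.find hP - k) = Nat.find hP from by omega]; exact hcL,
      fun j hj => by
        show 0 < (ω (c (k + j))).prob (c (k + (j + 1)) - c (k + j))
        rw [show k + (j + 1) = (k + j) + 1 from by omega]
        exact hcpos (k + j) (by omega)⟩
  have hL1 : 1 ≤ Nat.find hP := by
    rcases Nat.eq_zero_or_pos (Nat.find hP) with h0 | h
    · exact absurd (by rw [← hcL, h0, hc0]) hyne.symm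
    · exact h
  exact ⟨Nat.find hP, c, hL1, hc0, hcpos, hnorev, by rw [hcL]; exact hyx⟩

lemma pathWeight_pos_steps {ω : EnvOmega d} {t : ℕ} {c : ℕ → Site d}
    (h : 0 < pathWeight ω t c) :
    ∀ k < t, 0 < (ω (c k)).prob (c (k + 1) - c k) := by
  intro k hk
  rcases ((ω (c k)).nonneg (c (k + 1) - c k)).lt_or_eq with hlt | heq
  · exact hlt
  · exfalso
    have : pathWeight ω t c = 0 :=
      Finset.prod_eq_zero (Finset.mem_range.mpr hk) heq.symm
    rw [this] at h
    exact lt_irrefl 0 h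

lemma steps_exist {ω : EnvOmega d} {t : ℕ} {c : ℕ → Site d} (i₀ : Fin d × Bool)
    (hpos : ∀ k < t, 0 < (ω (c k)).prob (c (k + 1) - c k)) :
    ∃ τ : ℕ → Fin d × Bool, ∀ k < t, c (k + 1) - c k = stepVec d (τ k) := by
  have h : ∀ k, ∃ i, k < t → c (k + 1) - c k = stepVec d i := by
    intro k
    by_cases hk : k < t
    · obtain ⟨i, hi⟩ := (ω (c k)).support _ (ne_of_gt (hpos k hk))
      exact ⟨i, fun _ => hi⟩
    · exact ⟨i₀, fun h' => absurd h' hk⟩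
  choose τ hτ using h
  exact ⟨τ, fun k hk => hτ k hk⟩

lemma posW_of_path {c : ℕ → Site d} {τ : ℕ → Fin d × Bool} {t : ℕ}
    (hτ : ∀ k < t, c (k + 1) - c k = stepVec d (τ k)) :
    ∀ k ≤ t, posW (c 0) τ k = c k := by
  intro k hk
  induction k with
  | zero => exact posW_zero (c 0) τ
  | succ j ih =>
    rw [posW_succ, ih (by omega), ← hτ j (by omega)]
    abel

lemma Wt_of_path {ω : EnvOmega d} {c : ℕ → Site d} {τ : ℕ → Fin d × Bool} {t : ℕ}
    (hτ : ∀ k < t, c (k + 1) - c k = stepVec d (τ k)) :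
    Wt ω (c 0) τ t = pathWeight ω t c := by
  unfold Wt pathWeight
  apply Finset.prod_congr rfl
  intro k hk
  have hk' := Finset.mem_range.mp hk
  rw [posW_of_path hτ k (le_of_lt hk'), hτ k hk']

lemma follow_path {x : Site d} {t T : ℕ} {c : ℕ → Site d} {τ : ℕ → Fin d × Bool}
    {i₀ : Fin d × Bool} {σ : Fin T → Fin d × Bool} (hc0 : c 0 = x)
    (hτ : ∀ k < t, c (k + 1) - c k = stepVec d (τ k))
    (hσ : ∀ k < t, padD i₀ σ k = τ k) :
    ∀ k ≤ t, posW x (padD i₀ σ) k = c k := by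
  intro k hk
  have := posW_of_path (τ := padD i₀ σ)
    (fun k hk2 => by rw [hσ k hk2]; exact hτ k hk2) k hk
  rwa [hc0] at this

lemma reaches_of_chain {ω : EnvOmega d} (p : ℕ → Site d) (a b : ℕ) (hab : a ≤ b)
    (h : ∀ k, a ≤ k → k < b → 0 < (ω (p k)).prob (p (k + 1) - p k)) :
    Reaches ω (p a) (p b) := by
  induction b, hab using Nat.le_induction with
  | base => exact Relation.ReflTransGen.refl
  | succ n hn ih =>
    exact Relation.ReflTransGen.tail (ih fun k hk1 hk2 => h k hk1 (by omega))
      (h n hn (by omega))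

lemma loops_disj {x : Site d} {r r' : Σ n : ℕ, Fin (n + 1) → Site d}
    (hr : r ∈ loopSet x) (hr' : r' ∈ loopSet x) {T : ℕ}
    {σ : Fin T → Fin d × Bool} {i₀ : Fin d × Bool}
    (h1 : ∀ k ≤ r.1, posW x (padD i₀ σ) k = extF r.2 k)
    (h2 : ∀ k ≤ r'.1, posW x (padD i₀ σ) k = extF r'.2 k) : r = r' := by
  rcases lt_trichotomy r.1 r'.1 with h | h | h
  · exact absurd ((h2 r.1 (by omega)).symm.trans ((h1 r.1 le_rfl).trans hr.2.2.1))
      (hr'.2.2.2 r.1 (by have := hr.1; omega) h)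
  · exact sigma_eq h fun k hk => by rw [← h1 k hk, h2 k (by omega)]
  · exact absurd ((h1 r'.1 (by omega)).symm.trans ((h2 r'.1 le_rfl).trans hr'.2.2.1))
      (hr.2.2.2 r'.1 (by have := hr'.1; omega) h)

end

end RWT
namespace RWT

noncomputable section

variable {d : ℕ}

lemma loop_bound (hd : 0 < d) (ω : EnvOmega d) (x : Site d)
    (hC : (clusterC ω x).Infinite) (hM : (clusterM ω x).Finite) :
    ∃ ε : ℝ, 0 < ε ∧ ∀ F : Finset ↥(loopSet x),
      ∑ r ∈ F, wgt ω (r : Σ n : ℕ, Fin (n + 1) → Site d) ≤ 1 - ε := by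
  obtain ⟨L, s, hL1, hs0, hspos, hsnox, hsno⟩ := escape x hC hM
  set i₀ : Fin d × Bool := (⟨0, hd⟩, true) with hi₀
  set ε := pathWeight ω L s with hε
  have hεpos : 0 < ε :=
    Finset.prod_pos fun k hk => hspos k (Finset.mem_range.mp hk)
  obtain ⟨τs, hτs⟩ := steps_exist i₀ hspos
  refine ⟨ε, hεpos, ?_⟩
  intro F
  set Fp := F.filter (fun r : ↥(loopSet x) => 0 < wgt ω r.val) with hFp
  have hsum0 : ∑ r ∈ F, wgt ω r.val = ∑ r ∈ Fp, wgt ω r.val := by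
    refine (Finset.sum_subset (Finset.filter_subset _ _) ?_).symm
    intro r hr hnr
    have hpos : ¬ 0 < wgt ω r.val := fun hc => hnr (Finset.mem_filter.mpr ⟨hr, hc⟩)
    linarith [wgt_nonneg ω r.val]
  set T := max L (F.sup fun r : ↥(loopSet x) => r.val.1) with hT
  have hLT : L ≤ T := le_max_left _ _
  have hrT : ∀ r : ↥(loopSet x), r ∈ Fp → r.val.1 ≤ T := by
    intro r hr
    rw [hT]
    exact le_trans (Finset.le_sup (f := fun r : ↥(loopSet x) => r.val.1)
      (Finset.mem_of_mem_filter r hr)) (le_max_right _ _)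
  -- choose step sequences for positive-weight loops
  have hch : ∀ r : ↥(loopSet x), r ∈ Fp → ∃ τ : ℕ → Fin d × Bool,
      ∀ k < r.val.1, extF r.val.2 (k + 1) - extF r.val.2 k = stepVec d (τ k) := by
    intro r hr
    have hw : 0 < wgt ω r.val := (Finset.mem_filter.mp hr).2
    exact steps_exist i₀ (pathWeight_pos_steps hw)
  haveI : Nonempty (Fin d × Bool) := ⟨i₀⟩
  choose! τf hτf using hch
  -- pointwise bound
  have hpt : ∀ σ : Fin T → Fin d × Bool,
      (∑ r ∈ Fp, if ∀ k < r.val.1, padD i₀ σ k = τf r k then Wt ω x (padD i₀ σ) T else 0) +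
        (if ∀ k < L, padD i₀ σ k = τs k then Wt ω x (padD i₀ σ) T else 0)
      ≤ Wt ω x (padD i₀ σ) T := by
    intro σ
    by_cases hcs : ∀ k < L, padD i₀ σ k = τs k
    · have hno : ∀ r ∈ Fp, ¬(∀ k < r.val.1, padD i₀ σ k = τf r k) := by
        intro r hrF hcr
        have hwr : 0 < wgt ω r.val := (Finset.mem_filter.mp hrF).2
        have hτr := hτf r hrF
        have hlpos := pathWeight_pos_steps hwr
        have h1 : ∀ k ≤ r.val.1, posW x (padD i₀ σ) k = extF r.val.2 k :=
          follow_path r.2.2.1 hτr hcr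
        have h2 : ∀ k ≤ L, posW x (padD i₀ σ) k = s k := follow_path hs0 hτs hcs
        rcases le_or_gt r.val.1 L with hle | hlt
        · refine hsnox r.val.1 (by have := r.2.1; omega) hle ?_
          rw [← h2 r.val.1 hle, h1 r.val.1 le_rfl]
          exact r.2.2.2.1
        · apply hsno
          have hchain : Reaches ω (posW x (padD i₀ σ) L) (posW x (padD i₀ σ) r.val.1) := by
            apply reaches_of_chain _ L r.val.1 (by omega)
            intro k hk1 hk2
            have hpk : posW x (padD i₀ σ) k = extF r.val.2 k := h1 k (by omega)
            have hpk1 : posW x (padD i₀ σ) (k + 1) = extF r.val.2 (k + 1) :=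
              h1 (k + 1) (by omega)
            rw [hpk, hpk1]
            exact hlpos k hk2
          rw [h2 L le_rfl, h1 r.val.1 le_rfl, r.2.2.2.1] at hchain
          exact hchain
      rw [Finset.sum_eq_zero fun r hr => if_neg (hno r hr), zero_add, if_pos hcs]
    · rw [if_neg hcs, add_zero, ← Finset.sum_filter, Finset.sum_const]
      have hcard : (Fp.filter fun r : ↥(loopSet x) =>
          ∀ k < r.val.1, padD i₀ σ k = τf r k).card ≤ 1 := by
        apply Finset.card_le_one.mpr
        intro a ha b hb
        rw [Finset.mem_filter] at ha hb
        have h1a : ∀ k ≤ a.val.1, posW x (padD i₀ σ) k = extF a.val.2 k :=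
          follow_path a.2.2.1 (hτf a ha.1) ha.2
        have h1b : ∀ k ≤ b.val.1, posW x (padD i₀ σ) k = extF b.val.2 k :=
          follow_path b.2.2.1 (hτf b hb.1) hb.2
        exact Subtype.ext (loops_disj a.2 b.2 h1a h1b)
      have hWnn := Wt_nonneg ω x (padD i₀ σ) T
      interval_cases h : (Fp.filter fun r : ↥(loopSet x) =>
          ∀ k < r.val.1, padD i₀ σ k = τf r k).card
      · simpa using hWnn
      · simp
  -- summation
  have hsumle : (∑ σ : Fin T → Fin d × Bool,
      ((∑ r ∈ Fp, if ∀ k < r.val.1, padD i₀ σ k = τf r k then Wt ω x (padD i₀ σ) T else 0) +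
        (if ∀ k < L, padD i₀ σ k = τs k then Wt ω x (padD i₀ σ) T else 0))) ≤ 1 := by
    rw [← sum_Wt ω i₀ T x]
    exact Finset.sum_le_sum fun σ _ => hpt σ
  have hswap : (∑ σ : Fin T → Fin d × Bool,
      ((∑ r ∈ Fp, if ∀ k < r.val.1, padD i₀ σ k = τf r k then Wt ω x (padD i₀ σ) T else 0) +
        (if ∀ k < L, padD i₀ σ k = τs k then Wt ω x (padD i₀ σ) T else 0)))
      = (∑ r ∈ Fp, wgt ω r.val) + ε := by
    rw [Finset.sum_add_distrib, Finset.sum_comm]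
    congr 1
    · apply Finset.sum_congr rfl
      intro r hr
      rw [trace_sum ω i₀ r.val.1 T (hrT r hr) x (τf r)]
      have := Wt_of_path (ω := ω) (hτf r hr)
      rwa [r.2.2.1] at this
    · rw [trace_sum ω i₀ L T hLT x τs]
      have := Wt_of_path (ω := ω) hτs
      rwa [hs0] at this
  rw [hsum0]
  linarith [hswap ▸ hsumle]

end

end RWT
namespace RWT

noncomputable section

variable {d : ℕ}

lemma rho_lt_one (hd : 0 < d) (ω : EnvOmega d) (x : Site d)
    (hC : (clusterC ω x).Infinite) (hM : (clusterM ω x).Finite) : rho ω x < 1 := by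
  obtain ⟨ε, hε, hF⟩ := loop_bound hd ω x hC hM
  have bound : rho ω x ≤ ENNReal.ofReal (1 - ε) := by
    rw [rho, ENNReal.tsum_eq_iSup_sum]
    apply iSup_le
    intro F
    calc ∑ r ∈ F, ENNReal.ofReal (wgt ω (r : Σ n : ℕ, Fin (n + 1) → Site d))
        = ENNReal.ofReal (∑ r ∈ F, wgt ω (r : Σ n : ℕ, Fin (n + 1) → Site d)) :=
          (ENNReal.ofReal_sum_of_nonneg fun r _ => wgt_nonneg ω _).symm
      _ ≤ ENNReal.ofReal (1 - ε) := ENNReal.ofReal_le_ofReal (hF F)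
  exact lt_of_le_of_lt bound (ENNReal.ofReal_lt_one.mpr (by linarith))

lemma Q_V_zero (hd : 0 < d) {ω : EnvOmega d} {Q : Measure (PathSpace d)}
    (hQ : IsQuenchedRW ω Q) (x : Site d)
    (hC : (clusterC ω x).Infinite) (hM : (clusterM ω x).Finite) :
    Q {w : PathSpace d | {n : ℕ | w n = x}.Infinite} = 0 := by
  have hb := Q_V_le hQ x
  have hlt := rho_lt_one hd ω x hC hM
  have htend : Tendsto (fun m : ℕ => rho ω x ^ m) atTop (𝓝 0) :=
    ENNReal.tendsto_pow_atTop_nhds_zero_of_lt_one hlt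
  exact le_antisymm (ge_of_tendsto' htend fun m => hb m) zero_le

end

end RWT
/-- for a fixed environment `ω` with `|C_x| = ∞` and `|M_x| < ∞` for every
`x`, the walk in environment `ω` is transient `ℙ_ω`-a.s. (every site is visited only
finitely often). -/
theorem stmt6 {d : ℕ} (hd : 2 ≤ d) (ω : EnvOmega d)
    (hC : ∀ x : Site d, (clusterC ω x).Infinite)
    (hM : ∀ x : Site d, (clusterM ω x).Finite)
    (Q : Measure (PathSpace d)) (hQ : IsQuenchedRW ω Q) :
    Q {w : PathSpace d | ∀ x : Site d, {n : ℕ | w n = x}.Finite} = 1 := by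
  haveI : IsProbabilityMeasure Q := hQ.1
  have hnull : ∀ x : Site d, Q {w : PathSpace d | {n : ℕ | w n = x}.Infinite} = 0 :=
    fun x => RWT.Q_V_zero (by omega) hQ x (hC x) (hM x)
  have hBm : MeasurableSet (⋃ x : Site d, {w : PathSpace d | {n : ℕ | w n = x}.Infinite}) := by
    apply MeasurableSet.iUnion
    intro x
    have hrw : {w : PathSpace d | {n : ℕ | w n = x}.Infinite} =
        ⋂ N : ℕ, ⋃ n : ℕ, ⋃ (_ : N ≤ n), {w : PathSpace d | w n = x} := by
      ext w
      simp only [Set.mem_setOf_eq, Set.mem_iInter, Set.mem_iUnion]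
      constructor
      · intro h N
        obtain ⟨n, hn, hgt⟩ := h.exists_gt N
        exact ⟨n, le_of_lt hgt, hn⟩
      · intro h
        by_contra hfin
        rw [Set.not_infinite] at hfin
        obtain ⟨n, hle, hn⟩ := h (hfin.toFinset.sup id + 1)
        have : n ≤ hfin.toFinset.sup id :=
          Finset.le_sup (f := id) (hfin.mem_toFinset.mpr hn)
        omega
    rw [hrw]
    refine MeasurableSet.iInter fun N => MeasurableSet.iUnion fun n =>
      MeasurableSet.iUnion fun _ => ?_
    have hpre : {w : PathSpace d | w n = x} = (fun w : PathSpace d => w n) ⁻¹' {x} := by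
      ext w; simp
    rw [hpre]
    exact measurable_pi_apply n (measurableSet_singleton x)
  have hBnull : Q (⋃ x : Site d, {w : PathSpace d | {n : ℕ | w n = x}.Infinite}) = 0 :=
    measure_iUnion_null fun x => hnull x
  have hset : {w : PathSpace d | ∀ x : Site d, {n : ℕ | w n = x}.Finite} =
      (⋃ x : Site d, {w : PathSpace d | {n : ℕ | w n = x}.Infinite})ᶜ := by
    ext w
    simp [Set.not_infinite]
  rw [hset, measure_compl hBm (measure_ne_top Q _), hBnull, measure_univ, tsub_zero]
end

section
/- Let ω be any fixed environment such that |C_y| = ∞ for every y ∈ Z^d and such that there is a unique infinite mutually connected cluster M_∞ (i.e. a unique infinite set among the M_x, x ∈ Z^d). Then ℙ_ω-almost surely the recurrent set {x ∈ Z^d : X_n = x for infinitely many n} is either empty or equal to M_∞. -/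
open MeasureTheory Filter Set Topology
open scoped Classical ENNReal

namespace Stmt7Aux

open MeasureTheory

variable {d : ℕ}

/-- Index for finite prefixes of paths. -/
abbrev Idx (d : ℕ) := Σ n : ℕ, Fin (n + 1) → Site d

/-- Extend a finite prefix to a full function. -/
def extI (i : Idx d) : ℕ → Site d :=
  fun t => if h : t ≤ i.1 then i.2 ⟨t, Nat.lt_succ_of_le h⟩ else i.2 ⟨i.1, Nat.lt_succ_self _⟩

lemma extI_eq (i : Idx d) {t : ℕ} (h : t ≤ i.1) :
    extI i t = i.2 ⟨t, Nat.lt_succ_of_le h⟩ := dif_pos h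

/-- The prefix of a path. -/
def pre (w : ℕ → Site d) (n : ℕ) : Idx d := ⟨n, fun t => w t.1⟩

lemma extI_pre (w : ℕ → Site d) (n : ℕ) {t : ℕ} (h : t ≤ n) : extI (pre w n) t = w t := by
  simp only [pre, extI, dif_pos h]
  exact dif_pos h

/-- The cylinder set of a prefix. -/
def Cyl (i : Idx d) : Set (PathSpace d) := {w | ∀ t ≤ i.1, w t = extI i t}

lemma mem_Cyl_pre (w : PathSpace d) (n : ℕ) : w ∈ Cyl (pre w n) :=
  fun t ht => (extI_pre w n ht).symm

lemma measurableSet_cylEvent (n : ℕ) (A : Set (PathSpace d))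
    (hA : ∀ w w' : PathSpace d, (∀ t ≤ n, w t = w' t) → w ∈ A → w' ∈ A) :
    MeasurableSet A := by
  have hr : Measurable (fun w : PathSpace d => fun t : Fin (n + 1) => w t.1) :=
    measurable_pi_lambda _ (fun t => measurable_pi_apply _)
  have hset : A = (fun w : PathSpace d => fun t : Fin (n + 1) => w t.1) ⁻¹'
      {v : Fin (n + 1) → Site d | extI ⟨n, v⟩ ∈ A} := by
    ext w
    simp only [Set.mem_preimage, Set.mem_setOf_eq]
    constructor
    · intro hw
      exact hA w (extI (pre w n)) (fun t ht => (extI_pre w n ht).symm) hw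
    · intro hw
      exact hA (extI (pre w n)) w (fun t ht => extI_pre w n ht) hw
  rw [hset]
  exact hr (Set.Countable.measurableSet (Set.to_countable _))

lemma measurableSet_Cyl (i : Idx d) : MeasurableSet (Cyl i) := by
  refine measurableSet_cylEvent i.1 _ ?_
  intro w w' hag hw t ht
  rw [← hag t ht]; exact hw t ht

lemma pathWeight_nonneg (ω : EnvOmega d) (n : ℕ) (x : ℕ → Site d) :
    0 ≤ pathWeight ω n x :=
  Finset.prod_nonneg fun k _ => (ω (x k)).nonneg _

lemma pathWeight_congr (ω : EnvOmega d) (n : ℕ) {x y : ℕ → Site d}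
    (h : ∀ t ≤ n, x t = y t) : pathWeight ω n x = pathWeight ω n y := by
  unfold pathWeight
  refine Finset.prod_congr rfl fun k hk => ?_
  have hk' := Finset.mem_range.mp hk
  rw [h k (by omega), h (k + 1) (by omega)]

lemma Q_cyl (ω : EnvOmega d) (Q : Measure (PathSpace d)) (hQ : IsQuenchedRW ω Q) (i : Idx d) :
    Q (Cyl i) = ENNReal.ofReal
      ((if extI i 0 = 0 then (1 : ℝ) else 0) * pathWeight ω i.1 (extI i)) := by
  have hprob : IsProbabilityMeasure Q := hQ.1
  have h1 := hQ.2 i.1 (extI i)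
  have hne : Q {w | ∀ k ≤ i.1, w k = extI i k} ≠ ⊤ := measure_ne_top Q _
  have hC : Cyl i = {w | ∀ k ≤ i.1, w k = extI i k} := rfl
  rw [hC, ← h1, ENNReal.ofReal_toReal hne]

/-- `n` is the first visit to `x` at a time `≥ b`. -/
def nextVis (x : Site d) (w : ℕ → Site d) (b n : ℕ) : Prop :=
  b ≤ n ∧ w n = x ∧ ∀ t, b ≤ t → t < n → w t ≠ x

/-- `GoodP x m L w k n`: `n` is the `(k+1)`-st `L`-spaced visit to `x` after time `m`. -/
def GoodP (x : Site d) (m L : ℕ) (w : ℕ → Site d) : ℕ → ℕ → Prop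
  | 0, n => nextVis x w m n
  | k + 1, n => ∃ n', GoodP x m L w k n' ∧ nextVis x w (n' + L) n

lemma nextVis_unique {x : Site d} {w : ℕ → Site d} {b n n' : ℕ}
    (h1 : nextVis x w b n) (h2 : nextVis x w b n') : n = n' := by
  obtain ⟨hb, hx, hmin⟩ := h1
  obtain ⟨hb', hx', hmin'⟩ := h2
  by_contra hne
  rcases Nat.lt_or_ge n n' with h | h
  · exact hmin' n hb h hx
  · exact hmin n' hb' (by omega) hx'

lemma nextVis_congr {x : Site d} {w w' : ℕ → Site d} {b n : ℕ}
    (h : nextVis x w b n) (hag : ∀ t ≤ n, w' t = w t) : nextVis x w' b n := by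
  obtain ⟨hb, hx, hmin⟩ := h
  exact ⟨hb, by rw [hag n le_rfl]; exact hx,
    fun t htb htn => by rw [hag t (by omega)]; exact hmin t htb htn⟩

lemma goodP_le {x : Site d} {m L : ℕ} {w : ℕ → Site d} :
    ∀ {k n : ℕ}, GoodP x m L w k n → m ≤ n := by
  intro k
  induction k with
  | zero => intro n h; exact h.1
  | succ k ih =>
    intro n h
    obtain ⟨n', hg, hnx⟩ := h
    have := ih hg
    have := hnx.1
    omega

lemma goodP_val {x : Site d} {m L : ℕ} {w : ℕ → Site d} {k n : ℕ}
    (h : GoodP x m L w k n) : w n = x := by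
  cases k with
  | zero => exact h.2.1
  | succ k => obtain ⟨n', _, hnx⟩ := h; exact hnx.2.1

lemma goodP_congr {x : Site d} {m L : ℕ} {w w' : ℕ → Site d} :
    ∀ {k n : ℕ}, GoodP x m L w k n → (∀ t ≤ n, w' t = w t) → GoodP x m L w' k n := by
  intro k
  induction k with
  | zero => intro n h hag; exact nextVis_congr h hag
  | succ k ih =>
    intro n h hag
    obtain ⟨n', hg, hnx⟩ := h
    have hn' : n' ≤ n := le_trans (Nat.le_add_right n' L) hnx.1
    exact ⟨n', ih hg (fun t ht => hag t (by omega)), nextVis_congr hnx hag⟩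

lemma goodP_unique {x : Site d} {m L : ℕ} {w : ℕ → Site d} :
    ∀ {k n n' : ℕ}, GoodP x m L w k n → GoodP x m L w k n' → n = n' := by
  intro k
  induction k with
  | zero => intro n n' h1 h2; exact nextVis_unique h1 h2
  | succ k ih =>
    intro n n' h1 h2
    obtain ⟨a, ha, hna⟩ := h1
    obtain ⟨b, hb, hnb⟩ := h2
    have : a = b := ih ha hb
    subst this
    exact nextVis_unique hna hnb

lemma nextVis_exists {x : Site d} {w : ℕ → Site d}
    (hx : {t | w t = x}.Infinite) (b : ℕ) : ∃ n, nextVis x w b n := by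
  classical
  obtain ⟨t0, ht0mem, ht0⟩ := hx.exists_gt b
  have hex : ∃ t, b ≤ t ∧ w t = x := ⟨t0, by omega, ht0mem⟩
  refine ⟨Nat.find hex, (Nat.find_spec hex).1, (Nat.find_spec hex).2, ?_⟩
  intro t htb htn he
  exact Nat.find_min hex htn ⟨htb, he⟩

lemma goodP_exists {x : Site d} {m L : ℕ} {w : ℕ → Site d}
    (hx : {t | w t = x}.Infinite) : ∀ k, ∃ n, GoodP x m L w k n := by
  intro k
  induction k with
  | zero => exact nextVis_exists hx m
  | succ k ih =>
    obtain ⟨n', hn'⟩ := ih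
    obtain ⟨n, hn⟩ := nextVis_exists hx (n' + L)
    exact ⟨n, n', hn', hn⟩

lemma chain_of_reaches (ω : EnvOmega d) {x y : Site d} (h : Reaches ω x y) :
    ∃ (L : ℕ) (z : ℕ → Site d), z 0 = x ∧ z L = y ∧ (y ≠ x → 1 ≤ L) ∧
      ∀ j, j < L → 0 < (ω (z j)).prob (z (j + 1) - z j) := by
  induction h with
  | refl => exact ⟨0, fun _ => x, rfl, rfl, fun h => absurd rfl h, by omega⟩
  | @tail b c hab hbc ih =>
    obtain ⟨L, z, h0, hL, _, hs⟩ := ih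
    refine ⟨L + 1, fun t => if t ≤ L then z t else c, by simp [h0], by simp, fun _ => by omega, ?_⟩
    intro j hj
    rcases Nat.lt_or_ge j L with hjL | hjL
    · have h1 : j ≤ L := by omega
      have h2 : j + 1 ≤ L := by omega
      simpa [h1, h2] using hs j hjL
    · have hjeq : j = L := by omega
      subst hjeq
      have h1 : j ≤ j := le_rfl
      have h2 : ¬ (j + 1 ≤ j) := by omega
      simpa [h1, h2, hL] using hbc

lemma walk_reaches (ω : EnvOmega d) (w : ℕ → Site d)
    (hw : ∀ t, 0 < (ω (w t)).prob (w (t + 1) - w t)) {s t : ℕ} (hst : s ≤ t) :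
    Reaches ω (w s) (w t) := by
  induction t, hst using Nat.le_induction with
  | base => exact Relation.ReflTransGen.refl
  | succ n hn ih => exact ih.tail (hw n)

end Stmt7Aux
namespace Stmt7Aux

open MeasureTheory

variable {d : ℕ}

lemma nadm_null (ω : EnvOmega d) (Q : Measure (PathSpace d)) (hQ : IsQuenchedRW ω Q) :
    Q {w : PathSpace d | ¬ ∀ t, 0 < (ω (w t)).prob (w (t + 1) - w t)} = 0 := by
  classical
  have hsub : {w : PathSpace d | ¬ ∀ t, 0 < (ω (w t)).prob (w (t + 1) - w t)} ⊆
      ⋃ (t : ℕ) (i : Idx d),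
        (if i.1 = t + 1 ∧ (ω (extI i t)).prob (extI i (t + 1) - extI i t) = 0
          then Cyl i else ∅) := by
    intro w hw
    simp only [Set.mem_setOf_eq, not_forall] at hw
    obtain ⟨t, ht⟩ := hw
    have hz : (ω (w t)).prob (w (t + 1) - w t) = 0 :=
      le_antisymm (not_lt.mp ht) ((ω (w t)).nonneg _)
    refine Set.mem_iUnion.mpr ⟨t, Set.mem_iUnion.mpr ⟨pre w (t + 1), ?_⟩⟩
    rw [if_pos]
    · exact mem_Cyl_pre w (t + 1)
    · refine ⟨rfl, ?_⟩
      rw [extI_pre w (t + 1) (by omega), extI_pre w (t + 1) le_rfl]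
      exact hz
  refine measure_mono_null hsub ?_
  refine measure_iUnion_null fun t => measure_iUnion_null fun i => ?_
  split_ifs with h
  · rw [Q_cyl ω Q hQ i]
    have hpw : pathWeight ω i.1 (extI i) = 0 := by
      refine Finset.prod_eq_zero (Finset.mem_range.mpr ?_) h.2
      omega
    rw [hpw, mul_zero, ENNReal.ofReal_zero]
  · exact measure_empty

/-- The segment-avoidance set. -/
def Avs (y : Site d) (n L : ℕ) : Set (PathSpace d) :=
  {w | ∀ t, n < t → t ≤ n + L → w t ≠ y}

lemma key_cont (ω : EnvOmega d) (Q : Measure (PathSpace d)) (hQ : IsQuenchedRW ω Q)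
    (x y : Site d) (L : ℕ) (z : ℕ → Site d) (hz0 : z 0 = x) (hzL : z L = y) (hL : 1 ≤ L)
    (i : Idx d) (hvx : extI i i.1 = x) :
    Q (Cyl i ∩ Avs y i.1 L) ≤
      (1 - ENNReal.ofReal (∏ j ∈ Finset.range L, (ω (z j)).prob (z (j + 1) - z j))) *
        Q (Cyl i) := by
  classical
  have hprob : IsProbabilityMeasure Q := hQ.1
  set n := i.1 with hn
  set v := extI i with hv
  set p := ∏ j ∈ Finset.range L, (ω (z j)).prob (z (j + 1) - z j) with hp
  have hpnn : 0 ≤ p := Finset.prod_nonneg fun j _ => (ω (z j)).nonneg _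
  -- the extended path
  set vg : ℕ → Site d := fun t => if t ≤ n then v t else z (t - n) with hvg
  set j : Idx d := pre vg (n + L) with hj
  have hvgz : ∀ k ≤ L, vg (n + k) = z k := by
    intro k hk
    rcases Nat.eq_zero_or_pos k with h0 | h0
    · subst h0
      have h1 : vg (n + 0) = v n := by simp [hvg]
      rw [h1, hvx, ← hz0]
    · have hnot : ¬ (n + k ≤ n) := by omega
      have h1 : vg (n + k) = z (n + k - n) := by simp [hvg, hnot]
      rw [h1, show n + k - n = k by omega]
  have hextj : ∀ t ≤ n + L, extI j t = vg t := fun t ht => extI_pre vg (n + L) ht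
  -- Cyl j ⊆ Cyl i
  have hsub : Cyl j ⊆ Cyl i := by
    intro w hw t ht
    have h1 : w t = vg t := by
      have := hw t (by simp only [hj, pre]; omega)
      rwa [hextj t (by omega)] at this
    rw [h1, hvg]
    simp [ht]
    exact if_pos ht
  -- disjointness
  have hdisj : Disjoint (Cyl i ∩ Avs y n L) (Cyl j) := by
    rw [Set.disjoint_left]
    rintro w ⟨-, hav⟩ hwj
    have h1 : w (n + L) = vg (n + L) := by
      have := hwj (n + L) (by simp only [hj, pre]; omega)
      rwa [hextj (n + L) le_rfl] at this
    have h2 : vg (n + L) = y := by rw [hvgz L le_rfl, hzL]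
    exact hav (n + L) (by omega) le_rfl (h1.trans h2)
  -- measure of Cyl j
  have hQj : Q (Cyl j) = ENNReal.ofReal p * Q (Cyl i) := by
    rw [Q_cyl ω Q hQ j, Q_cyl ω Q hQ i]
    have hj1 : j.1 = n + L := rfl
    have h0 : extI j 0 = extI i 0 := by
      rw [hextj 0 (by omega)]
      simp only [hvg, if_pos (Nat.zero_le n)]
      rfl
    have hpwj : pathWeight ω j.1 (extI j) = pathWeight ω n v * p := by
      rw [hj1, pathWeight_congr ω (n + L) (fun t ht => hextj t ht)]
      unfold pathWeight
      rw [Finset.prod_range_add]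
      congr 1
      · refine Finset.prod_congr rfl fun k hk => ?_
        have hk' := Finset.mem_range.mp hk
        have e1 : vg k = v k := by simp only [hvg, if_pos (by omega : k ≤ n)]
        have e2 : vg (k + 1) = v (k + 1) := by simp only [hvg, if_pos (by omega : k + 1 ≤ n)]
        rw [e1, e2]
      · rw [hp]
        refine Finset.prod_congr rfl fun k hk => ?_
        have hk' := Finset.mem_range.mp hk
        have e1 : vg (n + k) = z k := hvgz k (by omega)
        have e2 : vg (n + k + 1) = z (k + 1) := by
          rw [show n + k + 1 = n + (k + 1) by omega]
          exact hvgz (k + 1) (by omega)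
        rw [e1, e2]
    rw [hpwj, h0]
    rw [show (if extI i 0 = 0 then (1:ℝ) else 0) * (pathWeight ω n v * p)
        = p * ((if extI i 0 = 0 then (1:ℝ) else 0) * pathWeight ω n v) by ring]
    rw [ENNReal.ofReal_mul hpnn]
  -- combine
  have hunion : Q (Cyl i ∩ Avs y n L) + Q (Cyl j) = Q ((Cyl i ∩ Avs y n L) ∪ Cyl j) :=
    (measure_union hdisj (measurableSet_Cyl j)).symm
  have hle : Q ((Cyl i ∩ Avs y n L) ∪ Cyl j) ≤ Q (Cyl i) :=
    measure_mono (Set.union_subset Set.inter_subset_left hsub)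
  have hkey : Q (Cyl i ∩ Avs y n L) + ENNReal.ofReal p * Q (Cyl i) ≤ Q (Cyl i) := by
    rw [← hQj, hunion]; exact hle
  have hne : ENNReal.ofReal p * Q (Cyl i) ≠ ⊤ :=
    ENNReal.mul_ne_top ENNReal.ofReal_ne_top (measure_ne_top Q _)
  have := ENNReal.le_sub_of_add_le_right hne hkey
  calc Q (Cyl i ∩ Avs y n L) ≤ Q (Cyl i) - ENNReal.ofReal p * Q (Cyl i) := this
    _ = (1 - ENNReal.ofReal p) * Q (Cyl i) := by
        rw [ENNReal.sub_mul (fun _ _ => measure_ne_top Q _), one_mul]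

end Stmt7Aux
namespace Stmt7Aux

open MeasureTheory

variable {d : ℕ}

lemma bad_null (ω : EnvOmega d) (Q : Measure (PathSpace d)) (hQ : IsQuenchedRW ω Q)
    (x y : Site d) (hxy : Reaches ω x y) (hne : y ≠ x) (m : ℕ) :
    Q {w : PathSpace d | {t | w t = x}.Infinite ∧ ∀ t, m ≤ t → w t ≠ y} = 0 := by
  classical
  have hprob : IsProbabilityMeasure Q := hQ.1
  obtain ⟨L, z, hz0, hzL, hL1, hstep⟩ := chain_of_reaches ω hxy
  have hL : 1 ≤ L := hL1 hne
  set p := ∏ j ∈ Finset.range L, (ω (z j)).prob (z (j + 1) - z j) with hp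
  have hppos : 0 < p := Finset.prod_pos fun j hj => hstep j (Finset.mem_range.mp hj)
  set c : ℝ≥0∞ := 1 - ENNReal.ofReal p with hc
  have hclt : c < 1 :=
    ENNReal.sub_lt_self ENNReal.one_ne_top one_ne_zero (ENNReal.ofReal_pos.mpr hppos).ne'
  set Pk : ℕ → Idx d → Prop := fun k i =>
    GoodP x m L (extI i) k i.1 ∧ ∀ t, m ≤ t → t ≤ i.1 → extI i t ≠ y with hPk
  set Gset : ℕ → Set (PathSpace d) := fun k => ⋃ (i : {i : Idx d // Pk k i}), Cyl i.1 with hG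
  have hmem_good : ∀ k (i : Idx d), Pk k i → ∀ w ∈ Cyl i, GoodP x m L w k i.1 :=
    fun k i hi w hw => goodP_congr hi.1 (fun t ht => hw t ht)
  have hbad_sub : ∀ k,
      {w : PathSpace d | {t | w t = x}.Infinite ∧ ∀ t, m ≤ t → w t ≠ y} ⊆ Gset k := by
    intro k w hw
    obtain ⟨hinf, havoid⟩ := hw
    obtain ⟨n, hn⟩ := goodP_exists (m := m) (L := L) hinf k
    have hPki : Pk k (pre w n) := by
      constructor
      · exact goodP_congr hn (fun t ht => extI_pre w n ht)
      · intro t hmt htn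
        replace htn : t ≤ n := htn
        rw [extI_pre w n htn]
        exact havoid t hmt
    exact Set.mem_iUnion.mpr ⟨⟨pre w n, hPki⟩, mem_Cyl_pre w n⟩
  have hdisj : ∀ k, Pairwise (Function.onFun Disjoint
      fun i : {i : Idx d // Pk k i} => Cyl i.1) := by
    intro k i j hij
    rw [Function.onFun, Set.disjoint_left]
    intro w hwi hwj
    apply hij
    have hgi : GoodP x m L w k i.1.1 := hmem_good k i.1 i.2 w hwi
    have hgj : GoodP x m L w k j.1.1 := hmem_good k j.1 j.2 w hwj
    have hfst : i.1.1 = j.1.1 := goodP_unique hgi hgj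
    apply Subtype.ext
    obtain ⟨⟨ni, fi⟩, hi⟩ := i
    obtain ⟨⟨nj, fj⟩, hj⟩ := j
    simp only at hfst
    subst hfst
    have hfun : fi = fj := by
      funext tt
      obtain ⟨t, ht⟩ := tt
      have ht' : t ≤ ni := by omega
      calc fi ⟨t, ht⟩ = extI ⟨ni, fi⟩ t := (extI_eq ⟨ni, fi⟩ ht').symm
        _ = w t := (hwi t ht').symm
        _ = extI ⟨ni, fj⟩ t := hwj t ht'
        _ = fj ⟨t, ht⟩ := extI_eq ⟨ni, fj⟩ ht'
    subst hfun
    rfl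
  have hGeq : ∀ k, Q (Gset k) = ∑' (i : {i : Idx d // Pk k i}), Q (Cyl i.1) :=
    fun k => measure_iUnion (hdisj k) (fun i => measurableSet_Cyl i.1)
  have hstepQ : ∀ k, Q (Gset (k + 1)) ≤ c * Q (Gset k) := by
    intro k
    have hsub2 : Gset (k + 1) ⊆
        ⋃ (i : {i : Idx d // Pk k i}), (Cyl i.1 ∩ Avs y i.1.1 L) := by
      intro w hw
      obtain ⟨⟨j, hj⟩, hwj⟩ := Set.mem_iUnion.mp hw
      replace hwj : w ∈ Cyl j := hwj
      have hgw : GoodP x m L w (k + 1) j.1 := hmem_good (k + 1) j hj w hwj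
      obtain ⟨n', hg', hnx⟩ := hgw
      have hmn' : m ≤ n' := goodP_le hg'
      have hn'L : n' + L ≤ j.1 := hnx.1
      have hPki : Pk k (pre w n') := by
        constructor
        · exact goodP_congr hg' (fun t ht => extI_pre w n' ht)
        · intro t hmt htn
          replace htn : t ≤ n' := htn
          rw [extI_pre w n' htn]
          have h1 : w t = extI j t := hwj t (by omega)
          rw [h1]
          exact hj.2 t hmt (by omega)
      refine Set.mem_iUnion.mpr ⟨⟨pre w n', hPki⟩, mem_Cyl_pre w n', ?_⟩
      intro t htn htL
      replace htn : n' < t := htn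
      replace htL : t ≤ n' + L := htL
      have h1 : w t = extI j t := hwj t (by omega)
      rw [h1]
      exact hj.2 t (by omega) (by omega)
    calc Q (Gset (k + 1)) ≤ Q (⋃ (i : {i : Idx d // Pk k i}), (Cyl i.1 ∩ Avs y i.1.1 L)) :=
          measure_mono hsub2
      _ ≤ ∑' (i : {i : Idx d // Pk k i}), Q (Cyl i.1 ∩ Avs y i.1.1 L) := measure_iUnion_le _
      _ ≤ ∑' (i : {i : Idx d // Pk k i}), c * Q (Cyl i.1) := by
          refine ENNReal.tsum_le_tsum fun i => ?_
          have hvx : extI i.1 i.1.1 = x := goodP_val i.2.1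
          have := key_cont ω Q hQ x y L z hz0 hzL hL i.1 hvx
          rw [hc]
          exact this
      _ = c * Q (Gset k) := by rw [ENNReal.tsum_mul_left, hGeq k]
  have hpow : ∀ k, Q (Gset k) ≤ c ^ k := by
    intro k
    induction k with
    | zero => simpa using prob_le_one
    | succ k ih =>
      calc Q (Gset (k + 1)) ≤ c * Q (Gset k) := hstepQ k
        _ ≤ c * c ^ k := mul_le_mul_right ih c
        _ = c ^ (k + 1) := by rw [pow_succ, mul_comm]
  have hbk : ∀ k, Q {w : PathSpace d | {t | w t = x}.Infinite ∧ ∀ t, m ≤ t → w t ≠ y} ≤ c ^ k :=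
    fun k => le_trans (measure_mono (hbad_sub k)) (hpow k)
  have htend : Filter.Tendsto (fun k => c ^ k) Filter.atTop (nhds 0) :=
    ENNReal.tendsto_pow_atTop_nhds_zero_of_lt_one hclt
  have hle0 : Q {w : PathSpace d | {t | w t = x}.Infinite ∧ ∀ t, m ≤ t → w t ≠ y} ≤ 0 :=
    ge_of_tendsto' htend hbk
  exact le_antisymm hle0 (zero_le)

end Stmt7Aux

/-- for a fixed environment with all `C_y` infinite and a unique infinite
mutually connected cluster `M∞`, `ℙ_ω`-a.s. the recurrent set is `∅` or `M∞`. -/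
theorem stmt7 {d : ℕ} (hd : 2 ≤ d) (ω : EnvOmega d)
    (hC : ∀ y : Site d, (clusterC ω y).Infinite)
    (Minf : Set (Site d)) (hM1 : Minf.Infinite) (hM2 : ∃ x : Site d, clusterM ω x = Minf)
    (hM3 : ∀ x : Site d, (clusterM ω x).Infinite → clusterM ω x = Minf)
    (Q : Measure (PathSpace d)) (hQ : IsQuenchedRW ω Q) :
    Q {w : PathSpace d |
        {x : Site d | {n : ℕ | w n = x}.Infinite} = ∅ ∨
        {x : Site d | {n : ℕ | w n = x}.Infinite} = Minf} = 1 := by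
  classical
  have hprob : IsProbabilityMeasure Q := hQ.1
  set S : Set (PathSpace d) := {w : PathSpace d |
      {x : Site d | {n : ℕ | w n = x}.Infinite} = ∅ ∨
      {x : Site d | {n : ℕ | w n = x}.Infinite} = Minf} with hS
  set NAdm : Set (PathSpace d) :=
    {w : PathSpace d | ¬ ∀ t, 0 < (ω (w t)).prob (w (t + 1) - w t)} with hNA
  set BadU : Set (PathSpace d) := ⋃ (x : Site d) (y : Site d) (m : ℕ),
      (if Reaches ω x y ∧ y ≠ x then
        {w : PathSpace d | {t | w t = x}.Infinite ∧ ∀ t, m ≤ t → w t ≠ y} else ∅) with hBU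
  have hN1 : Q NAdm = 0 := Stmt7Aux.nadm_null ω Q hQ
  have hN2 : Q BadU = 0 := by
    rw [hBU]
    refine measure_iUnion_null fun x => measure_iUnion_null fun y =>
      measure_iUnion_null fun m => ?_
    split_ifs with h
    · exact Stmt7Aux.bad_null ω Q hQ x y h.1 h.2 m
    · simp
  have hsub : Sᶜ ⊆ NAdm ∪ BadU := by
    intro w hw
    by_contra hcon
    simp only [Set.mem_union, not_or] at hcon
    obtain ⟨hadm', hbad'⟩ := hcon
    have hadm : ∀ t, 0 < (ω (w t)).prob (w (t + 1) - w t) := not_not.mp hadm'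
    have hbad : ∀ (x y : Site d) (m : ℕ), Reaches ω x y → y ≠ x →
        ¬({t | w t = x}.Infinite ∧ ∀ t, m ≤ t → w t ≠ y) := by
      intro x y m hr hne hcontra
      refine hbad' (Set.mem_iUnion.mpr ⟨x, Set.mem_iUnion.mpr ⟨y, Set.mem_iUnion.mpr ⟨m, ?_⟩⟩⟩)
      rw [if_pos ⟨hr, hne⟩]
      exact hcontra
    apply hw
    rw [hS]
    rcases Set.eq_empty_or_nonempty {x : Site d | {n : ℕ | w n = x}.Infinite} with he | hne
    · exact Or.inl he
    obtain ⟨x, hx⟩ := hne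
    have hx : {n : ℕ | w n = x}.Infinite := hx
    have claimC : ∀ y, Reaches ω x y → {n : ℕ | w n = y}.Infinite := by
      intro y hr
      by_cases hyx : y = x
      · subst hyx; exact hx
      by_contra hfin
      have hfin' : {n : ℕ | w n = y}.Finite := Set.not_infinite.mp hfin
      obtain ⟨M, hM⟩ := hfin'.bddAbove
      refine hbad x y (M + 1) hr hyx ⟨hx, ?_⟩
      intro t ht hty
      have : t ≤ M := hM (show t ∈ {n : ℕ | w n = y} from hty)
      omega
    have claimR : {x' : Site d | {n : ℕ | w n = x'}.Infinite} ⊆ clusterC ω x := by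
      intro u hu
      obtain ⟨s, hs⟩ := hx.nonempty
      obtain ⟨t, htmem, hst⟩ := Set.Infinite.exists_gt hu s
      have hh := Stmt7Aux.walk_reaches ω w hadm (le_of_lt hst)
      rw [hs, htmem] at hh
      exact hh
    have claimB : ∀ y, Reaches ω x y → Reaches ω y x := by
      intro y hr
      obtain ⟨s, hs⟩ := (claimC y hr).nonempty
      obtain ⟨t, htmem, hst⟩ := hx.exists_gt s
      have hh := Stmt7Aux.walk_reaches ω w hadm (le_of_lt hst)
      rw [hs, htmem] at hh
      exact hh
    have hRC : {x' : Site d | {n : ℕ | w n = x'}.Infinite} = clusterC ω x :=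
      Set.Subset.antisymm claimR (fun y hy => claimC y hy)
    have hMC : clusterM ω x = clusterC ω x := by
      ext y
      exact ⟨fun h => h.1, fun h => ⟨h, claimB y h⟩⟩
    have hMinf : (clusterM ω x).Infinite := by rw [hMC]; exact hC x
    right
    rw [hRC, ← hMC, hM3 x hMinf]
  have hcompl : Q Sᶜ = 0 := measure_mono_null hsub (measure_union_null hN1 hN2)
  have hge : (1 : ℝ≥0∞) ≤ Q S := by
    calc (1 : ℝ≥0∞) = Q (S ∪ Sᶜ) := by rw [Set.union_compl_self, measure_univ]
      _ ≤ Q S + Q Sᶜ := measure_union_le _ _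
      _ = Q S := by rw [hcompl, add_zero]
  exact le_antisymm prob_le_one hge
end

section
/- For any 2-valued environment in dimension d = 2, the deterministic velocity v = lim_{n→∞} n^{-1}X_n (which exists P-almost surely and is constant) satisfies (v^{[2]} − u_2^{[2]})(u_1^{[1]} − u_2^{[1]}) = (v^{[1]} − u_2^{[1]})(u_1^{[2]} − u_2^{[2]}). -/
open MeasureTheory Filter Set Topology
open scoped Classical ENNReal

noncomputable section

abbrev SIdx := Fin 2 × Bool

namespace Stmt15Aux

lemma prob_le_one {d : ℕ} (γ : EnvDist d) (u : Site d) : γ.prob u ≤ 1 := by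
  by_cases h : γ.prob u = 0
  · simp [h]
  · obtain ⟨i, rfl⟩ := γ.support u h
    rw [← γ.total]
    exact Finset.single_le_sum (fun j _ => γ.nonneg _) (Finset.mem_univ i)

lemma prob_injective {d : ℕ} : Function.Injective (EnvDist.prob (d := d)) := by
  intro a b h; cases a; cases b; simpa using h

lemma measurable_prob {d : ℕ} : Measurable (EnvDist.prob (d := d)) :=
  measurable_iff_comap_le.mpr le_rfl

lemma measurableSet_envSingleton {d : ℕ} (γ : EnvDist d) :
    MeasurableSet ({γ} : Set (EnvDist d)) := by
  have h1 : ({γ} : Set (EnvDist d)) = EnvDist.prob ⁻¹' {γ.prob} := by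
    ext a
    simp only [Set.mem_singleton_iff, Set.mem_preimage]
    exact ⟨fun h => by rw [h], fun h => prob_injective h⟩
  have h2 : MeasurableSet ({γ.prob} : Set (Site d → ℝ)) := by
    have : ({γ.prob} : Set (Site d → ℝ)) = ⋂ x : Site d, (fun g => g x) ⁻¹' {γ.prob x} := by
      ext g
      simp only [Set.mem_singleton_iff, Set.mem_iInter, Set.mem_preimage, funext_iff]
    rw [this]
    exact MeasurableSet.iInter fun x => (measurable_pi_apply x) (measurableSet_singleton _)
  rw [h1]
  exact measurable_prob h2

section WC

variable (w : Fin 2 → ℝ) (c : ℝ)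

/-- increment of the martingale -/
def dlt (e : SIdx) : ℝ := dotR (stepVec 2 e) w - c

/-- quenched weight of a step list started at `x` -/
def wsum (ω : EnvOmega 2) : Site 2 → List SIdx → ℝ
  | _, [] => 1
  | x, e :: t => (ω x).prob (stepVec 2 e) * wsum ω (x + stepVec 2 e) t

def mlist (l : List SIdx) : ℝ := (l.map (dlt w c)).sum

lemma wsum_nonneg (ω : EnvOmega 2) : ∀ (x : Site 2) (l : List SIdx), 0 ≤ wsum ω x l := by
  intro x l
  induction l generalizing x with
  | nil => norm_num [wsum]
  | cons e t ih => exact mul_nonneg ((ω x).nonneg _) (ih _)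

lemma wsum_le_one (ω : EnvOmega 2) : ∀ (x : Site 2) (l : List SIdx), wsum ω x l ≤ 1 := by
  intro x l
  induction l generalizing x with
  | nil => norm_num [wsum]
  | cons e t ih =>
      show (ω x).prob (stepVec 2 e) * wsum ω (x + stepVec 2 e) t ≤ 1
      exact mul_le_one₀ (prob_le_one _ _) (wsum_nonneg ω _ _) (ih _)

lemma mlist_cons (e : SIdx) (l : List SIdx) : mlist w c (e :: l) = dlt w c e + mlist w c l := by
  simp [mlist]

lemma sum_ofFn_succ {M : Type*} [AddCommMonoid M] (N : ℕ) (f : List SIdx → M) :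
    ∑ ε : Fin (N + 1) → SIdx, f (List.ofFn ε)
      = ∑ e : SIdx, ∑ g : Fin N → SIdx, f (e :: List.ofFn g) := by
  rw [Fintype.sum_equiv (Fin.consEquiv fun _ => SIdx).symm _
    (fun p : SIdx × (Fin N → SIdx) => f (p.1 :: List.ofFn p.2)) (fun ε => by
      congr 1
      rw [List.ofFn_succ]
      rfl)]
  exact Fintype.sum_prod_type _

end WC

section Quenched

variable (w : Fin 2 → ℝ) (c : ℝ) (ω : EnvOmega 2)
variable (hω : ∀ x : Site 2, ∑ e : SIdx, (ω x).prob (stepVec 2 e) * dlt w c e = 0)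
variable (B : ℝ) (hB : ∀ e : SIdx, (dlt w c e) ^ 2 ≤ B)

include hω in
lemma sum_wsum : ∀ (N : ℕ) (x : Site 2),
    ∑ ε : Fin N → SIdx, wsum ω x (List.ofFn ε) = 1 := by
  intro N
  induction N with
  | zero => intro x; simp [wsum]
  | succ N ih =>
      intro x
      rw [sum_ofFn_succ]
      have : ∀ e : SIdx, ∑ g : Fin N → SIdx, wsum ω x (e :: List.ofFn g)
          = (ω x).prob (stepVec 2 e) := by
        intro e
        simp only [wsum]
        rw [← Finset.mul_sum, ih, mul_one]
      simp only [this]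
      exact (ω x).total

include hω in
lemma sum_wsum_mul : ∀ (N : ℕ) (x : Site 2),
    ∑ ε : Fin N → SIdx, wsum ω x (List.ofFn ε) * mlist w c (List.ofFn ε) = 0 := by
  intro N
  induction N with
  | zero => intro x; simp [wsum, mlist]
  | succ N ih =>
      intro x
      rw [sum_ofFn_succ N (fun l => wsum ω x l * mlist w c l)]
      have : ∀ e : SIdx, ∑ g : Fin N → SIdx, wsum ω x (e :: List.ofFn g) * mlist w c (e :: List.ofFn g)
          = (ω x).prob (stepVec 2 e) * dlt w c e := by
        intro e
        simp only [wsum, mlist_cons, mul_add, Finset.sum_add_distrib]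
        have h1 : ∑ g : Fin N → SIdx,
            (ω x).prob (stepVec 2 e) * wsum ω (x + stepVec 2 e) (List.ofFn g) * dlt w c e
            = (ω x).prob (stepVec 2 e) * dlt w c e *
                ∑ g : Fin N → SIdx, wsum ω (x + stepVec 2 e) (List.ofFn g) := by
          rw [Finset.mul_sum]; exact Finset.sum_congr rfl (fun g _ => by ring)
        have h2 : ∑ g : Fin N → SIdx,
            (ω x).prob (stepVec 2 e) * wsum ω (x + stepVec 2 e) (List.ofFn g) * mlist w c (List.ofFn g)
            = (ω x).prob (stepVec 2 e) *
                ∑ g : Fin N → SIdx, wsum ω (x + stepVec 2 e) (List.ofFn g) * mlist w c (List.ofFn g) := by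
          rw [Finset.mul_sum]; exact Finset.sum_congr rfl (fun g _ => by ring)
        rw [h1, h2, sum_wsum w c ω hω N, ih, mul_one, mul_zero, add_zero]
      simp only [this]
      exact hω x

include hω hB in
lemma sum_wsum_mul_sq : ∀ (N : ℕ) (x : Site 2),
    ∑ ε : Fin N → SIdx, wsum ω x (List.ofFn ε) * (mlist w c (List.ofFn ε)) ^ 2 ≤ B * N := by
  intro N
  induction N with
  | zero => intro x; simp [wsum, mlist]
  | succ N ih =>
      intro x
      rw [sum_ofFn_succ N (fun l => wsum ω x l * mlist w c l ^ 2)]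
      have hkey : ∀ e : SIdx, ∑ g : Fin N → SIdx, wsum ω x (e :: List.ofFn g) * (mlist w c (e :: List.ofFn g)) ^ 2
          = (ω x).prob (stepVec 2 e) *
              ((dlt w c e) ^ 2 + ∑ g : Fin N → SIdx,
                wsum ω (x + stepVec 2 e) (List.ofFn g) * (mlist w c (List.ofFn g)) ^ 2) := by
        intro e
        simp only [wsum, mlist_cons]
        have expand : ∀ g : Fin N → SIdx,
            (ω x).prob (stepVec 2 e) * wsum ω (x + stepVec 2 e) (List.ofFn g) *
              (dlt w c e + mlist w c (List.ofFn g)) ^ 2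
            = (ω x).prob (stepVec 2 e) * ((dlt w c e)^2 * wsum ω (x + stepVec 2 e) (List.ofFn g)
              + (2 * dlt w c e) * (wsum ω (x + stepVec 2 e) (List.ofFn g) * mlist w c (List.ofFn g))
              + wsum ω (x + stepVec 2 e) (List.ofFn g) * (mlist w c (List.ofFn g))^2) := by
          intro g; ring
        rw [Finset.sum_congr rfl (fun g _ => expand g)]
        rw [← Finset.mul_sum]
        congr 1
        simp only [Finset.sum_add_distrib]
        rw [← Finset.mul_sum, ← Finset.mul_sum, sum_wsum w c ω hω N, sum_wsum_mul w c ω hω N,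
          mul_one, mul_zero, add_zero]
      rw [Finset.sum_congr rfl (fun e _ => hkey e)]
      have hbound : ∀ e : SIdx, (ω x).prob (stepVec 2 e) *
            ((dlt w c e) ^ 2 + ∑ g : Fin N → SIdx,
              wsum ω (x + stepVec 2 e) (List.ofFn g) * (mlist w c (List.ofFn g)) ^ 2)
          ≤ (ω x).prob (stepVec 2 e) * (B + B * N) := by
        intro e
        refine mul_le_mul_of_nonneg_left ?_ ((ω x).nonneg _)
        exact add_le_add (hB e) (ih _)
      calc ∑ e : SIdx, (ω x).prob (stepVec 2 e) *
            ((dlt w c e) ^ 2 + ∑ g : Fin N → SIdx,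
              wsum ω (x + stepVec 2 e) (List.ofFn g) * (mlist w c (List.ofFn g)) ^ 2)
          ≤ ∑ e : SIdx, (ω x).prob (stepVec 2 e) * (B + B * N) :=
            Finset.sum_le_sum (fun e _ => hbound e)
        _ = B * ((N : ℝ) + 1) := by rw [← Finset.sum_mul, (ω x).total]; ring
        _ = B * ((N + 1 : ℕ) : ℝ) := by push_cast; ring
      
end Quenched

-- ==== positions and path correspondence ====

def posL (l : List SIdx) : Site 2 := (l.map (stepVec 2)).sum

@[simp] lemma posL_nil : posL [] = 0 := rfl

@[simp] lemma posL_cons (e : SIdx) (l : List SIdx) :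
    posL (e :: l) = stepVec 2 e + posL l := by simp [posL]

def mwalk (w : Fin 2 → ℝ) (c : ℝ) (x : ℕ → Site 2) (N : ℕ) : ℝ :=
  ∑ m ∈ Finset.range N, (dotR (x (m + 1) - x m) w - c)

lemma dotR_sub (a b : Site 2) (w : Fin 2 → ℝ) : dotR (a - b) w = dotR a w - dotR b w := by
  simp only [dotR]
  rw [← Finset.sum_sub_distrib]
  refine Finset.sum_congr rfl (fun i _ => ?_)
  push_cast [Pi.sub_apply]
  ring

lemma mwalk_telescope (w : Fin 2 → ℝ) (c : ℝ) (x : ℕ → Site 2) (N : ℕ) :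
    mwalk w c x N = dotR (x N) w - dotR (x 0) w - N * c := by
  unfold mwalk
  rw [Finset.sum_sub_distrib]
  have h1 : ∑ m ∈ Finset.range N, dotR (x (m + 1) - x m) w
      = dotR (x N) w - dotR (x 0) w := by
    rw [← Finset.sum_range_sub (fun m => dotR (x m) w) N]
    exact Finset.sum_congr rfl (fun m _ => dotR_sub _ _ _)
  rw [h1, Finset.sum_const, Finset.card_range, nsmul_eq_mul]

lemma mwalk_congr (w : Fin 2 → ℝ) (c : ℝ) {x x' : ℕ → Site 2} (N : ℕ)
    (h : ∀ m ≤ N, x m = x' m) : mwalk w c x N = mwalk w c x' N := by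
  unfold mwalk
  refine Finset.sum_congr rfl (fun m hm => ?_)
  rw [Finset.mem_range] at hm
  rw [h m (by omega), h (m + 1) (by omega)]

lemma pathWeight_eq_wsum (ω : EnvOmega 2) : ∀ (l : List SIdx) (x0 : Site 2),
    pathWeight ω l.length (fun m => x0 + posL (l.take m)) = wsum ω x0 l := by
  intro l
  induction l with
  | nil => intro x0; simp [pathWeight, wsum]
  | cons e t ih =>
      intro x0
      unfold pathWeight
      simp only [List.length_cons]
      rw [Finset.prod_range_succ']
      have hfac : ∀ k : ℕ,
          (ω ((fun m => x0 + posL ((e :: t).take m)) (k + 1))).prob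
            ((fun m => x0 + posL ((e :: t).take m)) (k + 1 + 1)
              - (fun m => x0 + posL ((e :: t).take m)) (k + 1))
          = (ω ((fun m => (x0 + stepVec 2 e) + posL (t.take m)) k)).prob
            ((fun m => (x0 + stepVec 2 e) + posL (t.take m)) (k + 1)
              - (fun m => (x0 + stepVec 2 e) + posL (t.take m)) k) := by
        intro k
        simp only [List.take_succ_cons, posL_cons]
        simp only [add_assoc]
      rw [Finset.prod_congr rfl (fun k _ => hfac k)]
      have hlast : (ω ((fun m => x0 + posL ((e :: t).take m)) 0)).prob
          ((fun m => x0 + posL ((e :: t).take m)) (0 + 1)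
            - (fun m => x0 + posL ((e :: t).take m)) 0)
          = (ω x0).prob (stepVec 2 e) := by
        simp [posL]
      rw [hlast]
      have := ih (x0 + stepVec 2 e)
      unfold pathWeight at this
      rw [this, wsum, mul_comm]

lemma mwalk_eq_mlist (w : Fin 2 → ℝ) (c : ℝ) : ∀ (l : List SIdx) (x0 : Site 2),
    mwalk w c (fun m => x0 + posL (l.take m)) l.length = mlist w c l := by
  intro l
  induction l with
  | nil => intro x0; simp [mwalk, mlist]
  | cons e t ih =>
      intro x0
      unfold mwalk
      simp only [List.length_cons]
      rw [Finset.sum_range_succ']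
      have hfac : ∀ k : ℕ,
          (dotR ((fun m => x0 + posL ((e :: t).take m)) (k + 1 + 1)
              - (fun m => x0 + posL ((e :: t).take m)) (k + 1)) w - c)
          = (dotR ((fun m => (x0 + stepVec 2 e) + posL (t.take m)) (k + 1)
              - (fun m => (x0 + stepVec 2 e) + posL (t.take m)) k) w - c) := by
        intro k
        simp only [List.take_succ_cons, posL_cons]
        simp only [add_assoc]
      rw [Finset.sum_congr rfl (fun k _ => hfac k)]
      have hlast : (dotR ((fun m => x0 + posL ((e :: t).take m)) (0 + 1)
            - (fun m => x0 + posL ((e :: t).take m)) 0) w - c) = dlt w c e := by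
        have : x0 + posL ((e :: t).take 1) - (x0 + posL ((e :: t).take 0)) = stepVec 2 e := by
          simp [posL]
        rw [this]; rfl
      rw [hlast]
      have := ih (x0 + stepVec 2 e)
      unfold mwalk at this
      rw [this, mlist_cons, add_comm]

def xofL (l : List SIdx) : ℕ → Site 2 := fun m => posL (l.take m)

def xofY {N : ℕ} (y : Fin (N + 1) → Site 2) : ℕ → Site 2 :=
  fun k => y ⟨min k N, by omega⟩

def pk {N : ℕ} (ε : Fin N → SIdx) : Fin (N + 1) → Site 2 :=
  fun k => posL ((List.ofFn ε).take k)

lemma xofY_pk {N : ℕ} (ε : Fin N → SIdx) : xofY (pk ε) = xofL (List.ofFn ε) := by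
  funext k
  unfold xofY pk xofL
  show posL ((List.ofFn ε).take (min k N)) = posL ((List.ofFn ε).take k)
  rcases le_or_gt k N with h | h
  · rw [min_eq_left h]
  · rw [min_eq_right h.le]
    rw [List.take_of_length_le (by rw [List.length_ofFn]),
      List.take_of_length_le (by rw [List.length_ofFn]; omega)]

lemma xofL_funeq (l : List SIdx) : (fun m => (0 : Site 2) + posL (l.take m)) = xofL l := by
  funext m; simp [xofL]

lemma pathWeight_xofL (ω : EnvOmega 2) (l : List SIdx) :
    pathWeight ω l.length (xofL l) = wsum ω 0 l := by
  rw [← xofL_funeq]; exact pathWeight_eq_wsum ω l 0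

lemma mwalk_xofL (w : Fin 2 → ℝ) (c : ℝ) (l : List SIdx) :
    mwalk w c (xofL l) l.length = mlist w c l := by
  rw [← xofL_funeq]; exact mwalk_eq_mlist w c l 0

lemma posL_take_succ : ∀ (l : List SIdx) (m : ℕ) (h : m < l.length),
    posL (l.take (m + 1)) = posL (l.take m) + stepVec 2 l[m] := by
  intro l
  induction l with
  | nil => intro m h; simp at h
  | cons e t ih =>
      intro m h
      cases m with
      | zero => simp [posL]
      | succ m =>
          simp only [List.take_succ_cons, posL_cons, List.getElem_cons_succ]
          rw [ih m (by simpa using h), add_assoc]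

lemma posL_ofFn_take_succ {N : ℕ} (ε : Fin N → SIdx) (m : ℕ) (h : m < N) :
    posL ((List.ofFn ε).take (m + 1)) = posL ((List.ofFn ε).take m) + stepVec 2 (ε ⟨m, h⟩) := by
  rw [posL_take_succ (List.ofFn ε) m (by rw [List.length_ofFn]; exact h)]
  congr 1
  rw [List.getElem_ofFn]

lemma stepVec2_inj : Function.Injective (stepVec 2) := by decide

lemma pk_inj {N : ℕ} : Function.Injective (pk (N := N)) := by
  intro ε ε' h
  funext k
  have h1 := congrFun h ⟨(k : ℕ) + 1, by omega⟩
  have h2 := congrFun h ⟨(k : ℕ), by omega⟩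
  unfold pk at h1 h2
  simp only at h1 h2
  rw [posL_ofFn_take_succ ε k k.2, posL_ofFn_take_succ ε' k k.2, h2] at h1
  have := add_left_cancel h1
  exact stepVec2_inj this

lemma xofY_of_le {N : ℕ} (y : Fin (N + 1) → Site 2) {m : ℕ} (h : m ≤ N) :
    xofY y m = y ⟨m, by omega⟩ := by
  unfold xofY; exact congrArg y (Fin.mk_eq_mk.mpr (min_eq_left h))

lemma exists_pk {N : ℕ} (y : Fin (N + 1) → Site 2) (h0 : xofY y 0 = 0)
    (hstep : ∀ k, k < N → ∃ e : SIdx, xofY y (k + 1) - xofY y k = stepVec 2 e) :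
    ∃ ε : Fin N → SIdx, y = pk ε := by
  choose f hf using hstep
  refine ⟨fun k => f k k.2, ?_⟩
  have claim : ∀ m, ∀ hm : m ≤ N, y ⟨m, by omega⟩
      = posL ((List.ofFn (fun k : Fin N => f k k.2)).take m) := by
    intro m
    induction m with
    | zero =>
        intro _
        rw [← xofY_of_le y (Nat.zero_le N), h0]
        simp
    | succ m ihm =>
        intro hm
        have hmN : m < N := by omega
        rw [← xofY_of_le y hm]
        have hyy : xofY y (m + 1) = xofY y m + stepVec 2 (f m hmN) := by
          rw [← hf m hmN]; abel
        rw [hyy, xofY_of_le y hmN.le, ihm hmN.le, ← posL_ofFn_take_succ _ m hmN]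
    
  funext k
  exact claim k.1 (by omega)

end Stmt15Aux

namespace Stmt15Aux2
open Stmt15Aux

lemma pathWeight_nonneg (ω : EnvOmega 2) (N : ℕ) (x : ℕ → Site 2) :
    0 ≤ pathWeight ω N x :=
  Finset.prod_nonneg fun k _ => (ω (x k)).nonneg _

lemma measurable_pathprob (x u : Site 2) :
    Measurable (fun ω : EnvOmega 2 => (ω x).prob u) :=
  (measurable_pi_apply u).comp (measurable_prob.comp (measurable_pi_apply x))

lemma measurable_wsum : ∀ (l : List SIdx) (x : Site 2),
    Measurable (fun ω : EnvOmega 2 => wsum ω x l) := by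
  intro l
  induction l with
  | nil =>
      intro x
      have : (fun ω : EnvOmega 2 => wsum ω x []) = fun _ => (1:ℝ) := rfl
      rw [this]; exact measurable_const
  | cons e t ih =>
      intro x
      have : (fun ω : EnvOmega 2 => wsum ω x (e :: t))
          = fun ω => (ω x).prob (stepVec 2 e) * wsum ω (x + stepVec 2 e) t := rfl
      rw [this]
      exact (measurable_pathprob x _).mul (ih _)

lemma integrable_wsum (ν : Measure (EnvOmega 2)) [IsProbabilityMeasure ν]
    (l : List SIdx) (x : Site 2) : Integrable (fun ω => wsum ω x l) ν := by
  refine Integrable.mono' (integrable_const (1:ℝ))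
    (measurable_wsum l x).aestronglyMeasurable (ae_of_all _ fun ω => ?_)
  rw [Real.norm_eq_abs, abs_of_nonneg (wsum_nonneg ω x l)]
  exact wsum_le_one ω x l

def rr (ν : Measure (EnvOmega 2)) (N : ℕ) (y : Fin (N + 1) → Site 2) : ℝ :=
  (if xofY y 0 = 0 then (1 : ℝ) else 0) * ∫ ω, pathWeight ω N (xofY y) ∂ν

lemma rr_nonneg (ν : Measure (EnvOmega 2)) (N : ℕ) (y : Fin (N + 1) → Site 2) :
    0 ≤ rr ν N y := by
  refine mul_nonneg (by positivity) (integral_nonneg fun ω => pathWeight_nonneg ω N _)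

lemma pathWeight_xofL' (ω : EnvOmega 2) (l : List SIdx) (N : ℕ) (h : l.length = N) :
    pathWeight ω N (xofL l) = wsum ω 0 l := by
  subst h; exact pathWeight_xofL ω l

lemma mwalk_xofL' (w : Fin 2 → ℝ) (c : ℝ) (l : List SIdx) (N : ℕ) (h : l.length = N) :
    mwalk w c (xofL l) N = mlist w c l := by
  subst h; exact mwalk_xofL w c l

lemma tsum_moment_le (ν : Measure (EnvOmega 2)) [IsProbabilityMeasure ν]
    (w : Fin 2 → ℝ) (c : ℝ) (B : ℝ) (hB : ∀ e : SIdx, dlt w c e ^ 2 ≤ B)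
    (hgood : ∀ᵐ ω ∂ν, ∀ x : Site 2,
      ∑ e : SIdx, (ω x).prob (stepVec 2 e) * dlt w c e = 0) (N : ℕ) :
    ∑' y : Fin (N + 1) → Site 2,
        ENNReal.ofReal ((mwalk w c (xofY y) N) ^ 2 * rr ν N y)
      ≤ ENNReal.ofReal (B * N) := by
  classical
  set s : Finset (Fin (N + 1) → Site 2) :=
    Finset.image pk (Finset.univ : Finset (Fin N → SIdx)) with hs
  have hzero : ∀ y ∉ s, ENNReal.ofReal ((mwalk w c (xofY y) N) ^ 2 * rr ν N y) = 0 := by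
    intro y hy
    suffices h : rr ν N y = 0 by rw [h, mul_zero, ENNReal.ofReal_zero]
    by_cases h0 : xofY y 0 = 0
    · by_cases hst : ∀ k, k < N → ∃ e : SIdx, xofY y (k + 1) - xofY y k = stepVec 2 e
      · exfalso
        obtain ⟨ε, rfl⟩ := exists_pk y h0 hst
        exact hy (Finset.mem_image_of_mem _ (Finset.mem_univ ε))
      · push_neg at hst
        obtain ⟨k, hkN, hk⟩ := hst
        have hzz : ∀ ω : EnvOmega 2, pathWeight ω N (xofY y) = 0 := by
          intro ω
          apply Finset.prod_eq_zero (Finset.mem_range.mpr hkN)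
          by_contra hne
          obtain ⟨i, hi⟩ := (ω (xofY y k)).support _ hne
          exact hk i hi
        have : (fun ω : EnvOmega 2 => pathWeight ω N (xofY y)) = fun _ => (0:ℝ) :=
          funext hzz
        rw [rr, this, integral_zero, mul_zero]
    · rw [rr, if_neg h0, zero_mul]
  rw [tsum_eq_sum hzero, hs,
    Finset.sum_image (fun a _ b _ h => pk_inj h)]
  have hterm : ∀ ε : Fin N → SIdx,
      (mwalk w c (xofY (pk ε)) N) ^ 2 * rr ν N (pk ε)
        = (mlist w c (List.ofFn ε)) ^ 2 * ∫ ω, wsum ω 0 (List.ofFn ε) ∂ν := by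
    intro ε
    have hx : xofY (pk ε) = xofL (List.ofFn ε) := xofY_pk ε
    have hlen : (List.ofFn ε).length = N := List.length_ofFn
    have h0 : xofL (List.ofFn ε) 0 = 0 := by simp [xofL]
    rw [rr, hx, if_pos h0, one_mul]
    congr 1
    · rw [mwalk_xofL' w c _ N hlen]
    · have : (fun ω : EnvOmega 2 => pathWeight ω N (xofL (List.ofFn ε)))
          = fun ω => wsum ω 0 (List.ofFn ε) := by
        funext ω; rw [pathWeight_xofL' ω _ N hlen]
      rw [this]
  have hnn : ∀ ε : Fin N → SIdx,
      0 ≤ (mwalk w c (xofY (pk ε)) N) ^ 2 * rr ν N (pk ε) :=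
    fun ε => mul_nonneg (sq_nonneg _) (rr_nonneg ν N _)
  rw [← ENNReal.ofReal_sum_of_nonneg (fun ε _ => hnn ε)]
  apply ENNReal.ofReal_le_ofReal
  rw [Finset.sum_congr rfl (fun ε _ => hterm ε)]
  have hint : ∀ ε : Fin N → SIdx,
      Integrable (fun ω => wsum ω 0 (List.ofFn ε) * (mlist w c (List.ofFn ε)) ^ 2) ν :=
    fun ε => (integrable_wsum ν _ 0).mul_const _
  have hswap : ∀ ε : Fin N → SIdx,
      (mlist w c (List.ofFn ε)) ^ 2 * ∫ ω, wsum ω 0 (List.ofFn ε) ∂ν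
        = ∫ ω, wsum ω 0 (List.ofFn ε) * (mlist w c (List.ofFn ε)) ^ 2 ∂ν := by
    intro ε
    rw [integral_mul_const]
    ring
  rw [Finset.sum_congr rfl (fun ε _ => hswap ε),
    ← integral_finset_sum _ (fun ε _ => hint ε)]
  have hconst : (B * N : ℝ) = ∫ _ω, (B * N : ℝ) ∂ν := by
    rw [integral_const]; simp
  rw [hconst]
  refine integral_mono_ae (integrable_finset_sum _ (fun ε _ => hint ε))
    (integrable_const _) ?_
  refine hgood.mono fun ω hω => ?_
  exact sum_wsum_mul_sq w c ω hω B hB N 0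

lemma cylinder_eq {μ : Measure (EnvDist 2)} {P : Measure (RWSpace 2)}
    (hP : IsRWRE μ P) (N : ℕ) (x : ℕ → Site 2) :
    P {q : RWSpace 2 | ∀ k ≤ N, q.2 k = x k}
      = ENNReal.ofReal
          ((if x 0 = 0 then (1 : ℝ) else 0) * ∫ ω, pathWeight ω N x ∂(P.map Prod.fst)) := by
  haveI : IsProbabilityMeasure P := hP.1
  have h := hP.2.2 N x Set.univ MeasurableSet.univ
  simp only [Set.mem_univ, true_and, Measure.restrict_univ] at h
  rw [← h, ENNReal.ofReal_toReal (measure_ne_top P _)]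

lemma prob_bound {μ : Measure (EnvDist 2)} {P : Measure (RWSpace 2)}
    (hP : IsRWRE μ P) (w : Fin 2 → ℝ) (c : ℝ) (B : ℝ)
    (hB : ∀ e : SIdx, dlt w c e ^ 2 ≤ B)
    (hgood : ∀ᵐ ω ∂(P.map Prod.fst), ∀ x : Site 2,
      ∑ e : SIdx, (ω x).prob (stepVec 2 e) * dlt w c e = 0)
    (N : ℕ) (t : ℝ) (ht : 0 < t) :
    P {q : RWSpace 2 | t ≤ |mwalk w c q.2 N|}
      ≤ ENNReal.ofReal (t⁻¹ * t⁻¹ * (B * N)) := by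
  classical
  haveI : IsProbabilityMeasure P := hP.1
  haveI : IsProbabilityMeasure (P.map Prod.fst) := hP.2.1.2.1
  set ν := P.map Prod.fst with hν
  have hcov : {q : RWSpace 2 | t ≤ |mwalk w c q.2 N|}
      ⊆ ⋃ y : {y : Fin (N + 1) → Site 2 // t ≤ |mwalk w c (xofY y) N|},
          {q : RWSpace 2 | ∀ k ≤ N, q.2 k = xofY y.1 k} := by
    intro q hq
    have hmw : mwalk w c (xofY (fun k : Fin (N + 1) => q.2 k)) N = mwalk w c q.2 N := by
      apply mwalk_congr
      intro m hm
      rw [xofY_of_le _ hm]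
    refine Set.mem_iUnion.mpr ⟨⟨fun k => q.2 k, ?_⟩, ?_⟩
    · rw [hmw]; exact hq
    · intro k hk
      rw [xofY_of_le _ hk]
  refine le_trans (measure_mono hcov) (le_trans (measure_iUnion_le _) ?_)
  have hterm : ∀ y : {y : Fin (N + 1) → Site 2 // t ≤ |mwalk w c (xofY y) N|},
      P {q : RWSpace 2 | ∀ k ≤ N, q.2 k = xofY y.1 k}
        ≤ ENNReal.ofReal (t⁻¹ * t⁻¹ * ((mwalk w c (xofY y.1) N) ^ 2 * rr ν N y.1)) := by
    intro y
    rw [cylinder_eq hP N (xofY y.1)]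
    have heq : (if xofY y.1 0 = 0 then (1:ℝ) else 0) * ∫ ω, pathWeight ω N (xofY y.1) ∂ν
        = rr ν N y.1 := rfl
    rw [heq]
    apply ENNReal.ofReal_le_ofReal
    have h2 : t ^ 2 ≤ (mwalk w c (xofY y.1) N) ^ 2 := by
      rw [← sq_abs (mwalk w c (xofY y.1) N)]
      exact pow_le_pow_left₀ ht.le y.2 2
    have h1 : (1 : ℝ) ≤ t⁻¹ * t⁻¹ * (mwalk w c (xofY y.1) N) ^ 2 := by
      have ht0 : t ≠ 0 := ne_of_gt ht
      have hid : t⁻¹ * t⁻¹ * t ^ 2 = 1 := by field_simp [pow_two]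
      calc (1:ℝ) = t⁻¹ * t⁻¹ * t ^ 2 := hid.symm
        _ ≤ t⁻¹ * t⁻¹ * (mwalk w c (xofY y.1) N) ^ 2 := by
            apply mul_le_mul_of_nonneg_left h2 (by positivity)
    calc rr ν N y.1 = 1 * rr ν N y.1 := (one_mul _).symm
      _ ≤ (t⁻¹ * t⁻¹ * (mwalk w c (xofY y.1) N) ^ 2) * rr ν N y.1 :=
          mul_le_mul_of_nonneg_right h1 (rr_nonneg ν N _)
      _ = t⁻¹ * t⁻¹ * ((mwalk w c (xofY y.1) N) ^ 2 * rr ν N y.1) := by ring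
  refine le_trans (ENNReal.tsum_le_tsum hterm) ?_
  refine le_trans (ENNReal.tsum_comp_le_tsum_of_injective Subtype.val_injective
    (fun y : Fin (N + 1) → Site 2 =>
      ENNReal.ofReal (t⁻¹ * t⁻¹ * ((mwalk w c (xofY y) N) ^ 2 * rr ν N y)))) ?_
  have hre : ∀ y : Fin (N + 1) → Site 2,
      ENNReal.ofReal (t⁻¹ * t⁻¹ * ((mwalk w c (xofY y) N) ^ 2 * rr ν N y))
        = ENNReal.ofReal (t⁻¹ * t⁻¹) *
            ENNReal.ofReal ((mwalk w c (xofY y) N) ^ 2 * rr ν N y) := by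
    intro y
    exact ENNReal.ofReal_mul (by positivity)
  rw [tsum_congr hre, ENNReal.tsum_mul_left]
  calc ENNReal.ofReal (t⁻¹ * t⁻¹) *
        ∑' y : Fin (N + 1) → Site 2,
          ENNReal.ofReal ((mwalk w c (xofY y) N) ^ 2 * rr ν N y)
      ≤ ENNReal.ofReal (t⁻¹ * t⁻¹) * ENNReal.ofReal (B * N) :=
        mul_le_mul_right (tsum_moment_le ν w c B hB hgood N) _
    _ = ENNReal.ofReal (t⁻¹ * t⁻¹ * (B * N)) :=
        (ENNReal.ofReal_mul (by positivity)).symm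

end Stmt15Aux2

namespace Stmt15Aux
open Finset in
lemma sum_prob_dlt (w : Fin 2 → ℝ) (c : ℝ) (γ : EnvDist 2) :
    ∑ e : SIdx, γ.prob (stepVec 2 e) * dlt w c e = (∑ i, drift γ i * w i) - c := by
  unfold dlt dotR
  calc ∑ e : SIdx, γ.prob (stepVec 2 e) * ((∑ i, ((stepVec 2 e i : ℤ) : ℝ) * w i) - c)
      = (∑ e : SIdx, ∑ i, γ.prob (stepVec 2 e) * (((stepVec 2 e i : ℤ) : ℝ) * w i))
          - ∑ e : SIdx, γ.prob (stepVec 2 e) * c := by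
        rw [← Finset.sum_sub_distrib]
        refine Finset.sum_congr rfl fun e _ => ?_
        rw [mul_sub, Finset.mul_sum]
    _ = (∑ i, (∑ e : SIdx, γ.prob (stepVec 2 e) * ((stepVec 2 e i : ℤ) : ℝ)) * w i) - c := by
        congr 1
        · rw [Finset.sum_comm]
          refine Finset.sum_congr rfl fun i _ => ?_
          rw [Finset.sum_mul]
          exact Finset.sum_congr rfl fun e _ => by ring
        · rw [← Finset.sum_mul, γ.total, one_mul]
    _ = (∑ i, drift γ i * w i) - c := rfl

lemma tendsto_mwalk_div (w : Fin 2 → ℝ) (c : ℝ) (x : ℕ → Site 2) (v : Fin 2 → ℝ)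
    (hx : Tendsto (fun n : ℕ => (n : ℝ)⁻¹ • (fun i => ((x n i : ℤ) : ℝ))) atTop (𝓝 v)) :
    Tendsto (fun n : ℕ => (n : ℝ)⁻¹ * mwalk w c x n) atTop
      (𝓝 ((∑ i, v i * w i) - c)) := by
  have hφ : Continuous fun u : Fin 2 → ℝ => ∑ i, u i * w i :=
    continuous_finset_sum _ fun i _ => (continuous_apply i).mul continuous_const
  have hdot : Tendsto (fun n : ℕ => (n : ℝ)⁻¹ * dotR (x n) w) atTop
      (𝓝 (∑ i, v i * w i)) := by
    have h1 := (hφ.tendsto v).comp hx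
    refine h1.congr fun n => ?_
    show ∑ i, ((n : ℝ)⁻¹ • fun j => ((x n j : ℤ) : ℝ)) i * w i = (n : ℝ)⁻¹ * dotR (x n) w
    rw [dotR, Finset.mul_sum]
    refine Finset.sum_congr rfl fun i _ => ?_
    simp only [Pi.smul_apply, smul_eq_mul]
    ring
  have hinv : Tendsto (fun n : ℕ => (n : ℝ)⁻¹) atTop (𝓝 0) :=
    tendsto_inv_atTop_zero.comp tendsto_natCast_atTop_atTop
  have h0 : Tendsto (fun n : ℕ => (n : ℝ)⁻¹ * dotR (x 0) w) atTop (𝓝 0) := by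
    simpa using hinv.mul_const (dotR (x 0) w)
  have hc : Tendsto (fun n : ℕ => (n : ℝ)⁻¹ * (n * c)) atTop (𝓝 c) := by
    refine Tendsto.congr' ?_ (tendsto_const_nhds : Tendsto (fun _ : ℕ => c) atTop (𝓝 c))
    filter_upwards [eventually_ge_atTop 1] with n hn
    have hne : (n : ℝ) ≠ 0 := Nat.cast_ne_zero.mpr (by omega)
    field_simp
  have hfin := (hdot.sub h0).sub hc
  rw [sub_zero] at hfin
  refine hfin.congr fun n => ?_
  rw [mwalk_telescope]
  ring

end Stmt15Aux

namespace Stmt15Aux2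
open Stmt15Aux

lemma ae_good {μ : Measure (EnvDist 2)} {ν : Measure (EnvOmega 2)} (h : IsIIDEnv μ ν)
    (γ1 γ2 : EnvDist 2) (hne : γ1 ≠ γ2) (hsum : μ {γ1} + μ {γ2} = 1) :
    ∀ᵐ ω ∂ν, ∀ x : Site 2, ω x = γ1 ∨ ω x = γ2 := by
  haveI := h.1
  have hins : ({γ1, γ2} : Set (EnvDist 2)) = {γ1} ∪ {γ2} := Set.insert_eq _ _
  have hmeas : MeasurableSet ({γ1, γ2} : Set (EnvDist 2)) := by
    rw [hins]
    exact (measurableSet_envSingleton γ1).union (measurableSet_envSingleton γ2)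
  have hfull : μ ({γ1, γ2} : Set (EnvDist 2)) = 1 := by
    have hdisj : Disjoint ({γ1} : Set (EnvDist 2)) {γ2} :=
      Set.disjoint_singleton.mpr hne
    rw [hins, measure_union hdisj (measurableSet_envSingleton γ2), hsum]
  have hcompl : μ (({γ1, γ2} : Set (EnvDist 2))ᶜ) = 0 := by
    rw [measure_compl hmeas (measure_ne_top μ _), hfull, measure_univ, tsub_self]
  have hx0 : ∀ x : Site 2,
      ν {ω : EnvOmega 2 | ω x ∈ (({γ1, γ2} : Set (EnvDist 2))ᶜ)} = 0 := by
    intro x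
    have hprod := h.2.2 {x} (fun _ => ({γ1, γ2} : Set (EnvDist 2))ᶜ)
      (fun _ _ => hmeas.compl)
    have hset : {ω : EnvOmega 2 | ∀ y ∈ ({x} : Finset (Site 2)),
        ω y ∈ (({γ1, γ2} : Set (EnvDist 2))ᶜ)}
        = {ω : EnvOmega 2 | ω x ∈ (({γ1, γ2} : Set (EnvDist 2))ᶜ)} := by
      ext ω; simp
    rw [hset, Finset.prod_singleton, hcompl] at hprod
    exact hprod
  rw [ae_iff]
  have hsub : {ω : EnvOmega 2 | ¬ ∀ x : Site 2, ω x = γ1 ∨ ω x = γ2}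
      ⊆ ⋃ x : Site 2, {ω : EnvOmega 2 | ω x ∈ (({γ1, γ2} : Set (EnvDist 2))ᶜ)} := by
    intro ω hω
    simp only [Set.mem_setOf_eq, not_forall] at hω
    obtain ⟨x, hx⟩ := hω
    refine Set.mem_iUnion.mpr ⟨x, ?_⟩
    simp only [Set.mem_setOf_eq, Set.mem_compl_iff, Set.mem_insert_iff,
      Set.mem_singleton_iff]
    tauto
  exact le_antisymm
    (le_trans (measure_mono hsub) (le_of_eq (measure_iUnion_null hx0))) (zero_le)

end Stmt15Aux2

end

open Stmt15Aux Stmt15Aux2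

/-- for a 2-valued environment in dimension 2, the deterministic velocity
`v` satisfies `(v⁽²⁾ - u₂⁽²⁾)(u₁⁽¹⁾ - u₂⁽¹⁾) = (v⁽¹⁾ - u₂⁽¹⁾)(u₁⁽²⁾ - u₂⁽²⁾)`. -/
theorem stmt15 (γ1 γ2 : EnvDist 2) (hγ : γ1 ≠ γ2) (p : ℝ) (hp : p ∈ Set.Ioo (0 : ℝ) 1)
    (μ : Measure (EnvDist 2))
    (hμ1 : μ {γ1} = ENNReal.ofReal p) (hμ2 : μ {γ2} = ENNReal.ofReal (1 - p))
    (P : Measure (RWSpace 2)) (hP : IsRWRE μ P)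
    (v : Fin 2 → ℝ)
    (hv : P {q : RWSpace 2 |
        Tendsto (fun n : ℕ => (n : ℝ)⁻¹ • (fun i => ((q.2 n i : ℤ) : ℝ))) atTop (𝓝 v)} = 1) :
    (v 1 - drift γ2 1) * (drift γ1 0 - drift γ2 0) =
      (v 0 - drift γ2 0) * (drift γ1 1 - drift γ2 1) := by
  classical
  set w : Fin 2 → ℝ :=
    fun i => if i = 0 then -(drift γ1 1 - drift γ2 1) else (drift γ1 0 - drift γ2 0) with hwdef
  have hw0 : w 0 = -(drift γ1 1 - drift γ2 1) := by simp [hwdef]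
  have hw1 : w 1 = drift γ1 0 - drift γ2 0 := by simp [hwdef]
  set c : ℝ := ∑ i, drift γ2 i * w i with hcdef
  have hc2 : ∑ i, drift γ2 i * w i = c := rfl
  have hc1 : ∑ i, drift γ1 i * w i = c := by
    rw [hcdef, Fin.sum_univ_two, Fin.sum_univ_two, hw0, hw1]
    ring
  suffices hvw : ∑ i, v i * w i = c by
    rw [hcdef, Fin.sum_univ_two, Fin.sum_univ_two, hw0, hw1] at hvw
    linear_combination hvw
  by_contra hne
  haveI hPP : IsProbabilityMeasure P := hP.1
  haveI hνP : IsProbabilityMeasure (P.map Prod.fst) := hP.2.1.2.1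
  -- almost every environment is two-valued
  have hsum : μ {γ1} + μ {γ2} = 1 := by
    rw [hμ1, hμ2, ← ENNReal.ofReal_add hp.1.le (by linarith [hp.2])]
    norm_num
  have hgood0 : ∀ᵐ ω ∂(P.map Prod.fst), ∀ x : Site 2, ω x = γ1 ∨ ω x = γ2 :=
    ae_good hP.2.1 γ1 γ2 hγ hsum
  have hsite : ∀ γ : EnvDist 2, γ = γ1 ∨ γ = γ2 →
      ∑ e : SIdx, γ.prob (stepVec 2 e) * dlt w c e = 0 := by
    intro γ hγγ
    rcases hγγ with rfl | rfl
    · rw [sum_prob_dlt, hc1, sub_self]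
    · rw [sum_prob_dlt, hc2, sub_self]
  have hgood : ∀ᵐ ω ∂(P.map Prod.fst), ∀ x : Site 2,
      ∑ e : SIdx, (ω x).prob (stepVec 2 e) * dlt w c e = 0 :=
    hgood0.mono fun ω h x => hsite _ (h x)
  -- bound on increments
  set B : ℝ := ∑ e : SIdx, dlt w c e ^ 2 with hBdef
  have hB : ∀ e : SIdx, dlt w c e ^ 2 ≤ B := by
    intro e
    rw [hBdef]
    exact Finset.single_le_sum (f := fun e : SIdx => dlt w c e ^ 2) (fun i _ => sq_nonneg _) (Finset.mem_univ e)
  have hB0 : 0 ≤ B := by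
    rw [hBdef]
    exact Finset.sum_nonneg fun i _ => sq_nonneg _
  set εq : ℝ := |∑ i, v i * w i - c| / 2 with hεqdef
  have hεq0 : 0 < εq := by
    have : 0 < |∑ i, v i * w i - c| := abs_pos.mpr (sub_ne_zero.mpr hne)
    rw [hεqdef]; linarith
  -- the events
  set A : ℕ → Set (RWSpace 2) := fun n =>
    {q : RWSpace 2 | εq * (((n + 1) ^ 2 : ℕ) : ℝ) ≤ |mwalk w c q.2 ((n + 1) ^ 2)|} with hAdef
  have hm2pos : ∀ n : ℕ, (0 : ℝ) < (((n + 1) ^ 2 : ℕ) : ℝ) := by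
    intro n; positivity
  have hPA : ∀ n : ℕ, P (A n) ≤ ENNReal.ofReal
      ((εq * (((n + 1) ^ 2 : ℕ) : ℝ))⁻¹ * (εq * (((n + 1) ^ 2 : ℕ) : ℝ))⁻¹ *
        (B * (((n + 1) ^ 2 : ℕ) : ℝ))) := by
    intro n
    exact prob_bound hP w c B hB hgood ((n + 1) ^ 2) _
      (mul_pos hεq0 (hm2pos n))
  -- summability
  set a : ℕ → ℝ := fun n => (εq⁻¹ * εq⁻¹ * B) * (1 / ((n : ℝ) + 1) ^ 2) with hadef
  have ha_nonneg : ∀ n, 0 ≤ a n := by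
    intro n
    have : 0 ≤ εq⁻¹ := inv_nonneg.mpr hεq0.le
    positivity
  have haeq : ∀ n : ℕ,
      (εq * (((n + 1) ^ 2 : ℕ) : ℝ))⁻¹ * (εq * (((n + 1) ^ 2 : ℕ) : ℝ))⁻¹ *
        (B * (((n + 1) ^ 2 : ℕ) : ℝ)) = a n := by
    intro n
    have hn1 : ((n : ℝ) + 1) ≠ 0 := by positivity
    have hεne : εq ≠ 0 := ne_of_gt hεq0
    rw [hadef]
    push_cast
    field_simp
  have hsummable : Summable a := by
    apply Summable.mul_left
    have h1 : Summable (fun n : ℕ => 1 / (n : ℝ) ^ 2) :=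
      Real.summable_one_div_nat_pow.mpr (by norm_num)
    have h2 := (_root_.summable_nat_add_iff 1).mpr h1
    refine h2.congr fun n => ?_
    push_cast
    ring
  have htsum : ∑' n, P (A n) ≠ ⊤ := by
    have hle : ∑' n, P (A n) ≤ ∑' n, ENNReal.ofReal (a n) := by
      refine ENNReal.tsum_le_tsum fun n => ?_
      rw [← haeq n]
      exact hPA n
    have heq : ∑' n, ENNReal.ofReal (a n) = ENNReal.ofReal (∑' n, a n) :=
      (ENNReal.ofReal_tsum_of_nonneg ha_nonneg hsummable).symm
    exact ne_top_of_le_ne_top (by rw [heq]; exact ENNReal.ofReal_ne_top) hle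
  have hlim : P (limsup A atTop) = 0 := measure_limsup_atTop_eq_zero htsum
  -- pick a point
  set T : Set (RWSpace 2) := {q : RWSpace 2 |
    Tendsto (fun n : ℕ => (n : ℝ)⁻¹ • (fun i => ((q.2 n i : ℤ) : ℝ))) atTop (𝓝 v)} with hTdef
  have hpos : P (T ∩ (limsup A atTop)ᶜ) ≠ 0 := by
    intro h0
    have hsub : T ⊆ (T ∩ (limsup A atTop)ᶜ) ∪ limsup A atTop := by
      intro q hq
      by_cases hq2 : q ∈ limsup A atTop
      · exact Or.inr hq2
      · exact Or.inl ⟨hq, hq2⟩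
    have : P T ≤ P (T ∩ (limsup A atTop)ᶜ) + P (limsup A atTop) :=
      le_trans (measure_mono hsub) (measure_union_le _ _)
    rw [hv, h0, hlim, add_zero] at this
    simp at this
  obtain ⟨q, hqT, hqL⟩ := nonempty_of_measure_ne_zero hpos
  -- convergence along the subsequence
  have htend : Tendsto (fun n : ℕ => (n : ℝ)⁻¹ * mwalk w c q.2 n) atTop
      (𝓝 ((∑ i, v i * w i) - c)) := tendsto_mwalk_div w c q.2 v hqT
  have hsubseq : Tendsto (fun n : ℕ => (n + 1) ^ 2) atTop atTop := by
    refine tendsto_atTop_mono (fun n => ?_) tendsto_id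
    show id n ≤ (n + 1) ^ 2
    simp only [id_eq]
    have : n + 1 ≤ (n + 1) ^ 2 := Nat.le_self_pow (by norm_num) _
    omega
  have htend2 := htend.comp hsubseq
  have habs : Tendsto (fun n : ℕ =>
      |((((n + 1) ^ 2 : ℕ) : ℝ))⁻¹ * mwalk w c q.2 ((n + 1) ^ 2)|) atTop
      (𝓝 |(∑ i, v i * w i) - c|) := htend2.abs
  -- eventual bound
  have hev : ∀ᶠ n in atTop, q ∉ A n := by
    have hqL' : ¬ ∀ N0 : ℕ, ∃ n, n ≥ N0 ∧ q ∈ A n := by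
      intro hcon
      apply hqL
      rw [limsup_eq_iInf_iSup_of_nat]
      simp only [Set.iInf_eq_iInter, Set.iSup_eq_iUnion, Set.mem_iInter, Set.mem_iUnion]
      intro N0
      obtain ⟨n, hn, h⟩ := hcon N0
      exact ⟨n, hn, h⟩
    push_neg at hqL'
    obtain ⟨N0, hN0⟩ := hqL'
    filter_upwards [eventually_ge_atTop N0] with n hn
    exact hN0 n hn
  have hle : |(∑ i, v i * w i) - c| ≤ εq := by
    refine le_of_tendsto habs ?_
    filter_upwards [hev] with n hn
    have hlt : |mwalk w c q.2 ((n + 1) ^ 2)| < εq * (((n + 1) ^ 2 : ℕ) : ℝ) := by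
      by_contra hcon
      exact hn (le_of_not_gt hcon)
    have hpos2 := hm2pos n
    have hinv : (0 : ℝ) ≤ ((((n + 1) ^ 2 : ℕ) : ℝ))⁻¹ := inv_nonneg.mpr hpos2.le
    calc |((((n + 1) ^ 2 : ℕ) : ℝ))⁻¹ * mwalk w c q.2 ((n + 1) ^ 2)|
        = ((((n + 1) ^ 2 : ℕ) : ℝ))⁻¹ * |mwalk w c q.2 ((n + 1) ^ 2)| := by
          rw [abs_mul, abs_of_nonneg hinv]
      _ ≤ ((((n + 1) ^ 2 : ℕ) : ℝ))⁻¹ * (εq * (((n + 1) ^ 2 : ℕ) : ℝ)) :=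
          mul_le_mul_of_nonneg_left hlt.le hinv
      _ = εq := by field_simp
  rw [hεqdef] at hle
  have : 0 < |∑ i, v i * w i - c| := abs_pos.mpr (sub_ne_zero.mpr hne)
  linarith
end
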